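/- arXiv:2212.03949 — 7 statements merged into one kernel-verified Lean document; each statement's English description precedes it below -/
import Mathlib

section
/- Let Γ be a generalized recursive atom ordering of a finite bounded poset P. Then for any linear extension of P used in the atom reordering process, the reordering of Γ is a recursive atom ordering of P. -/
/-- `l` is a saturated chain from `x` to `y` in the poset `α`:
a list `x = x₀ ⋖ x₁ ⋖ ⋯ ⋖ x_k = y` of elements, each covered by the next. -/
def SatChain {α : Type*} [PartialOrder α] (x y : α) (l : List α) : Prop :=
  l.Chain' (· ⋖ ·) ∧ l.head? = some x ∧ l.getLast? = some y

/-- A chain-atom ordering of a bounded poset `α`: for each `u : α` and each root `r`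
(a saturated chain from `⊥` to `u`, recorded as a list ending in `u`), a strict linear
order on the atoms of the rooted interval `[u, ⊤]_r`, i.e. on the elements covering `u`.
The relation is recorded for all pairs `(u, r)`; only genuine roots are relevant. -/
structure ChainAtomOrdering (α : Type*) [PartialOrder α] where
  lt : α → List α → α → α → Prop
  irrefl : ∀ u r a, ¬ lt u r a a
  trans : ∀ u r a b c, lt u r a b → lt u r b c → lt u r a c
  total : ∀ u r a b, u ⋖ a → u ⋖ b → a ≠ b → lt u r a b ∨ lt u r b a

/-- `a` is the first atom of the rooted interval `[u,v]_r` in the chain-atom ordering `S`. -/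
def ChainAtomOrdering.IsFirstAtom {α : Type*} [PartialOrder α] (S : ChainAtomOrdering α)
    (u v : α) (r : List α) (a : α) : Prop :=
  u ⋖ a ∧ a ≤ v ∧ ∀ b, u ⋖ b → b ≤ v → b ≠ a → S.lt u r a b

/-- `IsGRAO S u v r`: the restriction of the chain-atom ordering `S` to the rooted
interval `[u,v]_r` is a generalized recursive atom ordering (GRAO) of `[u,v]`.
Either `[u,v]` has length 1, or: (i)(a) for each atom `a` of `[u,v]_r` the restriction
to `[a,v]_{r·a}` is a GRAO; (i)(b) for each atom `a` and each `a ⋖ x ⋖ w ≤ v`, either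
the first atom of `[a,w]_{r·a}` lies above some atom of `[u,v]_r` earlier than `a`, or
no atom of `[a,w]_{r·a}` does; (ii) if atoms `ai, aj` of `[u,v]_r` with `ai` earlier
than `aj` lie below a common `y ≤ v`, then some `z` with `aj ⋖ z ≤ y` lies above an
atom of `[u,v]_r` earlier than `aj`. -/
inductive IsGRAO {α : Type*} [PartialOrder α] (S : ChainAtomOrdering α) :
    α → α → List α → Prop
  | base (u v : α) (r : List α) (h : u ⋖ v) : IsGRAO S u v r
  | step (u v : α) (r : List α)
      (ia : ∀ a, u ⋖ a → a ≤ v → IsGRAO S a v (r ++ [a]))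
      (ib : ∀ a x w, u ⋖ a → a ≤ v → a ⋖ x → x ⋖ w → w ≤ v →
        (∃ b, S.IsFirstAtom a w (r ++ [a]) b ∧
          ∃ a', u ⋖ a' ∧ a' ≤ v ∧ S.lt u r a' a ∧ a' < b) ∨
        (∀ b a', a ⋖ b → b ≤ w → u ⋖ a' → a' ≤ v → S.lt u r a' a → ¬ a' < b))
      (ii : ∀ ai aj y, u ⋖ ai → ai ≤ v → u ⋖ aj → aj ≤ v → S.lt u r ai aj →
        ai < y → aj < y → y ≤ v →
        ∃ ak z, u ⋖ ak ∧ ak ≤ v ∧ S.lt u r ak aj ∧ aj ⋖ z ∧ z ≤ y ∧ ak < z) :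
      IsGRAO S u v r

/-- `IsRAO S u v r`: the restriction of the chain-atom ordering `S` to the rooted
interval `[u,v]_r` is a recursive atom ordering (RAO) of `[u,v]`.  It differs from a
GRAO only in condition (i)(b): for each atom `a` of `[u,v]_r`, every atom of
`[a,v]_{r·a}` lying above some atom of `[u,v]_r` earlier than `a` must precede every
atom of `[a,v]_{r·a}` lying above no such atom. -/
inductive IsRAO {α : Type*} [PartialOrder α] (S : ChainAtomOrdering α) :
    α → α → List α → Prop
  | base (u v : α) (r : List α) (h : u ⋖ v) : IsRAO S u v r
  | step (u v : α) (r : List α)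
      (ia : ∀ a, u ⋖ a → a ≤ v → IsRAO S a v (r ++ [a]))
      (ib : ∀ a b c, u ⋖ a → a ≤ v → a ⋖ b → b ≤ v → a ⋖ c → c ≤ v →
        (∃ a', u ⋖ a' ∧ a' ≤ v ∧ S.lt u r a' a ∧ a' < b) →
        (∀ a', u ⋖ a' → a' ≤ v → S.lt u r a' a → ¬ a' < c) →
        S.lt a (r ++ [a]) b c)
      (ii : ∀ ai aj y, u ⋖ ai → ai ≤ v → u ⋖ aj → aj ≤ v → S.lt u r ai aj →
        ai < y → aj < y → y ≤ v →
        ∃ ak z, u ⋖ ak ∧ ak ≤ v ∧ S.lt u r ak aj ∧ aj ⋖ z ∧ z ≤ y ∧ ak < z) :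
      IsRAO S u v r

/-- `MemF S uminus rminus u v a`: the atom `a` of the rooted interval `[u,v]_{rminus·u}`
belongs to the set `F_r(u,v)`: `a` lies above some atom `u'` of `[uminus,v]_{rminus}`
that comes earlier than `u` in the `S`-order on the atoms of `[uminus,⊤]_{rminus}`. -/
def MemF {α : Type*} [PartialOrder α] (S : ChainAtomOrdering α)
    (uminus : α) (rminus : List α) (u v a : α) : Prop :=
  u ⋖ a ∧ a ≤ v ∧ ∃ u', uminus ⋖ u' ∧ u' ≤ v ∧ S.lt uminus rminus u' u ∧ u' < a

/-- `MemG S uminus rminus u v a`: the atom `a` of `[u,v]_{rminus·u}` belongs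
to `G_r(u,v)`, the complement of `F_r(u,v)` among the atoms of `[u,v]`. -/
def MemG {α : Type*} [PartialOrder α] (S : ChainAtomOrdering α)
    (uminus : α) (rminus : List α) (u v a : α) : Prop :=
  u ⋖ a ∧ a ≤ v ∧ ¬ MemF S uminus rminus u v a

/-- `IsReorderingOn v Ω Γ`: the chain-atom ordering `Γ` (restricted to the interval
`[⊥,v]`) is the result of applying the atom reordering process to the restriction of
`Ω` to `[⊥,v]`.  This is the declarative characterization of the bottom-to-top
reordering procedure (for any linear extension): the order on the atoms of `[⊥,v]`
is unchanged, and for each `u ≠ ⊥` with root `rminus·u`, the elements of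
`F_r(u,v)` (computed with respect to the already-reordered orders strictly below `u`,
i.e. with respect to `Γ`) precede those of `G_r(u,v)`, and the relative `Ω`-order
within `F_r(u,v)` and within `G_r(u,v)` is preserved. -/
def IsReorderingOn {α : Type*} [PartialOrder α] [OrderBot α] (v : α)
    (Om Ga : ChainAtomOrdering α) : Prop :=
  (∀ a b, (⊥ : α) ⋖ a → a ≤ v → (⊥ : α) ⋖ b → b ≤ v →
    (Ga.lt ⊥ [⊥] a b ↔ Om.lt ⊥ [⊥] a b)) ∧
  (∀ (rminus : List α) (uminus u : α), SatChain (⊥ : α) uminus rminus → uminus ⋖ u →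
    ∀ a b, u ⋖ a → a ≤ v → u ⋖ b → b ≤ v →
      (Ga.lt u (rminus ++ [u]) a b ↔
        (MemF Ga uminus rminus u v a ∧ ¬ MemF Ga uminus rminus u v b) ∨
        ((MemF Ga uminus rminus u v a ↔ MemF Ga uminus rminus u v b) ∧
          Om.lt u (rminus ++ [u]) a b)))

/-- `Γ` is the result of applying the atom reordering process to `Ω` on all of `α`. -/
def IsReordering {α : Type*} [PartialOrder α] [BoundedOrder α]
    (Om Ga : ChainAtomOrdering α) : Prop :=
  IsReorderingOn (⊤ : α) Om Ga


section ReorderingProof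

variable {α : Type*} [PartialOrder α] [BoundedOrder α] [Fintype α]

private lemma no_cycle (S : ChainAtomOrdering α) {u : α} {r : List α} {p q : α}
    (h1 : S.lt u r p q) (h2 : S.lt u r q p) : False :=
  S.irrefl u r p (S.trans u r p q p h1 h2)

/-- Among the atoms of `u` satisfying `Q`, there is an `S`-first one. -/
private lemma exists_first_among (S : ChainAtomOrdering α) (u : α) (r : List α) (Q : α → Prop)
    (hne : ∃ a, u ⋖ a ∧ Q a) :
    ∃ a1, (u ⋖ a1 ∧ Q a1) ∧ ∀ b, u ⋖ b → Q b → b ≠ a1 → S.lt u r a1 b := by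
  classical
  have key : ∀ s : Finset α, (∀ x ∈ s, u ⋖ x ∧ Q x) → s.Nonempty →
      ∃ a1 ∈ s, ∀ b ∈ s, b ≠ a1 → S.lt u r a1 b := by
    intro s
    induction s using Finset.induction_on with
    | empty => intro _ h; exact absurd h (by simp)
    | @insert x s hx ih =>
      intro hall _
      rcases s.eq_empty_or_nonempty with rfl | hsne
      · refine ⟨x, Finset.mem_insert_self _ _, ?_⟩
        intro b hb hbne
        simp only [Finset.mem_insert, Finset.notMem_empty, or_false] at hb
        exact absurd hb hbne
      · obtain ⟨a1, ha1, hmin⟩ := ih (fun y hy => hall y (Finset.mem_insert_of_mem hy)) hsne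
        have hxatom := hall x (Finset.mem_insert_self x s)
        have ha1atom := hall a1 (Finset.mem_insert_of_mem ha1)
        have hne : x ≠ a1 := fun e => hx (e ▸ ha1)
        rcases S.total u r x a1 hxatom.1 ha1atom.1 hne with h | h
        · refine ⟨x, Finset.mem_insert_self _ _, ?_⟩
          intro b hb hbne
          rcases Finset.mem_insert.mp hb with rfl | hb'
          · exact absurd rfl hbne
          · rcases eq_or_ne b a1 with rfl | hb2
            · exact h
            · exact S.trans u r x a1 b h (hmin b hb' hb2)
        · refine ⟨a1, Finset.mem_insert_of_mem ha1, ?_⟩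
          intro b hb hbne
          rcases Finset.mem_insert.mp hb with rfl | hb'
          · exact h
          · exact hmin b hb' hbne
  obtain ⟨a, ha, hQ⟩ := hne
  obtain ⟨a1, ha1, hmin⟩ := key (Finset.univ.filter fun x => u ⋖ x ∧ Q x)
    (fun x hxx => (Finset.mem_filter.mp hxx).2)
    ⟨a, Finset.mem_filter.mpr ⟨Finset.mem_univ _, ha, hQ⟩⟩
  exact ⟨a1, (Finset.mem_filter.mp ha1).2, fun b hb hQb hbne =>
    hmin b (Finset.mem_filter.mpr ⟨Finset.mem_univ _, hb, hQb⟩) hbne⟩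

/-- If an atom `t` of `[a, y]` equals `y`, but something lies strictly between `a` and `y`,
contradiction; so `t < y`. -/
private lemma atom_lt_of_between {a t c y : α} (hat : a ⋖ t) (hty : t ≤ y)
    (h1 : a < c) (h2 : c < y) : t < y := by
  rcases hty.lt_or_eq with h | rfl
  · exact h
  · exact absurd h2 (hat.2 h1)

/-- Condition (ii) extracted from a GRAO on `[u, ⊤]`. -/
private lemma grao_ii (S : ChainAtomOrdering α) {u : α} {r : List α} (h : IsGRAO S u ⊤ r) :
    ∀ ai aj y, u ⋖ ai → u ⋖ aj → S.lt u r ai aj → ai < y → aj < y →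
    ∃ ak z, u ⋖ ak ∧ S.lt u r ak aj ∧ aj ⋖ z ∧ z ≤ y ∧ ak < z := by
  cases h with
  | base u v r hc =>
    intro ai aj y h1 h2 h3 h4 h5
    exact absurd (h4.trans_le le_top) (hc.2 h1.1)
  | step u v r ia ib ii =>
    intro ai aj y h1 h2 h3 h4 h5
    obtain ⟨ak, z, hk1, _, hk3, hk4, hk5, hk6⟩ :=
      ii ai aj y h1 le_top h2 le_top h3 h4 h5 le_top
    exact ⟨ak, z, hk1, hk3, hk4, hk5, hk6⟩

/-- Condition (i)(b) extracted from a GRAO on `[um, ⊤]`. -/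
private lemma grao_ib (S : ChainAtomOrdering α) {um : α} {r : List α} (h : IsGRAO S um ⊤ r) :
    ∀ a x w, um ⋖ a → a ⋖ x → x ⋖ w →
      (∃ b, S.IsFirstAtom a w (r ++ [a]) b ∧
        ∃ a', um ⋖ a' ∧ a' ≤ ⊤ ∧ S.lt um r a' a ∧ a' < b) ∨
      (∀ b a', a ⋖ b → b ≤ w → um ⋖ a' → a' ≤ ⊤ → S.lt um r a' a → ¬ a' < b) := by
  cases h with
  | base u v r hc =>
    intro a x w ha hax hxw
    exact absurd (hax.lt.trans (hxw.lt.trans_le le_top)) (hc.2 ha.lt)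
  | step u v r ia ib ii =>
    intro a x w ha hax hxw
    exact ib a x w ha le_top hax hxw le_top

private lemma grao_atom {S : ChainAtomOrdering α} {u v : α} {r : List α} {a : α}
    (h : IsGRAO S u v r) (ha : u ⋖ a) (hav : a ≤ v) : IsGRAO S a v (r ++ [a]) := by
  cases h with
  | base u v r hc =>
    rcases hav.lt_or_eq with hlt | rfl
    · exact absurd hlt (hc.2 ha.lt)
    · refine IsGRAO.step a a (r ++ [a]) ?_ ?_ ?_
      · intro b hb hbv
        exact absurd hb.lt (not_lt_of_ge hbv)
      · intro b x w hb hbv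
        exact absurd hb.lt (not_lt_of_ge hbv)
      · intro ai aj y hai haiv
        exact absurd hai.lt (not_lt_of_ge haiv)
  | step u v r ia ib ii => exact ia a ha hav

/-- Rooted elements: `u` together with a saturated chain from `⊥` to `u`. -/
inductive Root : α → List α → Prop
  | bot : Root ⊥ [⊥]
  | step {u r a} : Root u r → u ⋖ a → Root a (r ++ [a])

private lemma Root.satChain {u : α} {r : List α} (h : Root u r) : SatChain (⊥ : α) u r := by
  induction h with
  | bot => exact ⟨List.isChain_singleton _, rfl, rfl⟩
  | @step u r a hr hc ih =>
    obtain ⟨h1, h2, h3⟩ := ih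
    refine ⟨List.isChain_append.mpr ⟨h1, List.isChain_singleton _, ?_⟩, ?_, ?_⟩
    · intro x hxx y hyy
      simp only [List.head?_cons, Option.mem_some_iff] at hyy
      rw [h3] at hxx
      simp only [Option.mem_some_iff] at hxx
      exact hxx ▸ hyy ▸ hc
    · cases r with
      | nil => simp at h2
      | cons b l => simpa using h2
    · exact List.getLast?_concat

private lemma grao_root {Ga : ChainAtomOrdering α} (h : IsGRAO Ga ⊥ ⊤ [⊥])
    {u : α} {r : List α} (hr : Root u r) : IsGRAO Ga u ⊤ r := by
  induction hr with
  | bot => exact h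
  | @step u r a hr hc ih => exact grao_atom ih hc le_top

/-- The key globalization of condition (i)(b): in a GRAO, if some atom of `[a,w]` is
in `F` (lies above an atom earlier than `a`), then the first atom of `[a,w]` is in `F`. -/
private lemma star (Ga : ChainAtomOrdering α) {u a : α} {r : List α}
    (hG1 : IsGRAO Ga u ⊤ r) (hG2 : IsGRAO Ga a ⊤ (r ++ [a])) (hua : u ⋖ a)
    {w : α} (hs : ∃ s, a ⋖ s ∧ s ≤ w ∧ MemF Ga u r a ⊤ s)
    {a1 : α} (h1 : a ⋖ a1) (h1w : a1 ≤ w)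
    (hfirst : ∀ b, a ⋖ b → b ≤ w → b ≠ a1 → Ga.lt a (r ++ [a]) a1 b) :
    MemF Ga u r a ⊤ a1 := by
  by_contra h0
  -- take the Ga-minimal element s0 of F ∩ atoms[a,w]
  obtain ⟨s0, ⟨hs0a, hs0w, hs0F⟩, hs0min⟩ :=
    exists_first_among Ga a (r ++ [a]) (fun x => x ≤ w ∧ MemF Ga u r a ⊤ x)
      (by obtain ⟨s, h1, h2, h3⟩ := hs; exact ⟨s, h1, h2, h3⟩)
  have hne : a1 ≠ s0 := fun e => h0 (e ▸ hs0F)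
  have hlt : Ga.lt a (r ++ [a]) a1 s0 := hfirst s0 hs0a hs0w (Ne.symm hne)
  have hs0ltw : s0 < w := by
    rcases hs0w.lt_or_eq with h | rfl
    · exact h
    · rcases h1w.lt_or_eq with h' | h'
      · exact absurd h' (hs0a.2 h1.lt)
      · exact absurd h' hne
  have ha1ltw : a1 < w := by
    rcases h1w.lt_or_eq with h | rfl
    · exact h
    · exact absurd hs0ltw (h1.2 hs0a.lt)
  obtain ⟨ck, z, hck1, hck2, hsz, hzw, hckz⟩ :=
    grao_ii Ga hG2 a1 s0 w h1 hs0a hlt ha1ltw hs0ltw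
  rcases grao_ib Ga hG1 a s0 z hua hs0a hsz with ⟨b, hbF, q', hq1, hq2, hq3, hq4⟩ | hbeta
  · -- b is the first atom of [a,z] and b ∈ F
    have hbMemF : MemF Ga u r a ⊤ b := ⟨hbF.1, le_top, q', hq1, hq2, hq3, hq4⟩
    have hbw : b ≤ w := hbF.2.1.trans hzw
    -- b ∈ F ∩ atoms[a,w], so s0 is Ga-before or equal to b
    have hbs0 : Ga.lt a (r ++ [a]) b s0 := by
      rcases eq_or_ne ck b with rfl | hckb
      · exact hck2
      · exact Ga.trans _ _ _ _ _ (hbF.2.2 ck hck1 hckz.le hckb) hck2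
    rcases eq_or_ne b s0 with rfl | hbs0ne
    · exact Ga.irrefl _ _ _ hbs0
    · exact no_cycle Ga hbs0 (hs0min b hbF.1 ⟨hbw, hbMemF⟩ hbs0ne)
  · obtain ⟨_, _, q, hq1, hq2, hq3, hq4⟩ := hs0F
    exact hbeta s0 q hs0a hsz.le hq1 hq2 hq3 hq4

/-- The master induction along roots: the reordered ordering `Ga'` at `(u, r)` is
characterized by the `Ga`-computed `F`-set, that `F`-set satisfies the STAR property,
and `Ga'` satisfies condition (ii) at `(u, r)`. -/
private lemma master (Ga Ga' : ChainAtomOrdering α) (hre : IsReordering Ga Ga')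
    (hG : IsGRAO Ga ⊥ ⊤ [⊥]) :
    ∀ u r, Root u r → ∃ F : α → Prop,
      (∀ a b, u ⋖ a → u ⋖ b →
        (Ga'.lt u r a b ↔ (F a ∧ ¬ F b) ∨ ((F a ↔ F b) ∧ Ga.lt u r a b))) ∧
      (∀ w, (∃ s, u ⋖ s ∧ s ≤ w ∧ F s) → ∀ a1, u ⋖ a1 → a1 ≤ w →
          (∀ b, u ⋖ b → b ≤ w → b ≠ a1 → Ga.lt u r a1 b) → F a1) ∧
      (∀ ai aj y, u ⋖ ai → u ⋖ aj → Ga'.lt u r ai aj → ai < y → aj < y →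
          ∃ ak z, u ⋖ ak ∧ Ga'.lt u r ak aj ∧ aj ⋖ z ∧ z ≤ y ∧ ak < z) := by
  intro u r hroot
  induction hroot with
  | bot =>
    refine ⟨fun _ => False, ?_, ?_, ?_⟩
    · intro a b ha hb
      rw [hre.1 a b ha le_top hb le_top]
      simp
    · intro w hs a1 _ _ _
      obtain ⟨s, _, _, hF⟩ := hs
      exact hF
    · intro ai aj y hai haj hlt hay hjy
      have hGlt : Ga.lt ⊥ [⊥] ai aj := (hre.1 ai aj hai le_top haj le_top).mp hlt
      obtain ⟨ak, z, hk1, hk2, hk3, hk4, hk5⟩ := grao_ii Ga hG ai aj y hai haj hGlt hay hjy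
      exact ⟨ak, z, hk1, (hre.1 ak aj hk1 le_top haj le_top).mpr hk2, hk3, hk4, hk5⟩
  | @step u r a hroot hua ih =>
    obtain ⟨F, key, star_u, ii'⟩ := ih
    have hGu : IsGRAO Ga u ⊤ r := grao_root hG hroot
    have hGa : IsGRAO Ga a ⊤ (r ++ [a]) := grao_atom hGu hua le_top
    set Fa : α → Prop := MemF Ga u r a ⊤ with hFa_def
    have hreKey : ∀ x y, a ⋖ x → a ⋖ y →
        (Ga'.lt a (r ++ [a]) x y ↔
          (MemF Ga' u r a ⊤ x ∧ ¬ MemF Ga' u r a ⊤ y) ∨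
          ((MemF Ga' u r a ⊤ x ↔ MemF Ga' u r a ⊤ y) ∧ Ga.lt a (r ++ [a]) x y)) :=
      fun x y hx hy => hre.2 r u a hroot.satChain hua x y hx le_top hy le_top
    -- F-invariance: MemF computed with Ga' equals MemF computed with Ga
    have hinv : ∀ x, MemF Ga' u r a ⊤ x ↔ Fa x := by
      intro x
      constructor
      · rintro ⟨hax, -, q, hq1, -, hq3, hq4⟩
        rcases (key q a hq1 hua).mp hq3 with ⟨hFq, hFna⟩ | ⟨-, hGlt⟩
        · -- q ∈ F, a ∉ F : use star_u on [u, x]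
          obtain ⟨a1, ⟨ha1, ha1x⟩, hmin⟩ :=
            exists_first_among Ga u r (fun b => b ≤ x) ⟨a, hua, hax.lt.le⟩
          have hFa1 : F a1 := star_u x ⟨q, hq1, hq4.le, hFq⟩ a1 ha1 ha1x hmin
          have hne : a ≠ a1 := fun e => hFna (e ▸ hFa1)
          have hlt : Ga.lt u r a1 a := hmin a hua hax.lt.le hne
          have ha1ltx : a1 < x := atom_lt_of_between ha1 ha1x hua.lt hax.lt
          exact ⟨hax, le_top, a1, ha1, le_top, hlt, ha1ltx⟩
        · exact ⟨hax, le_top, q, hq1, le_top, hGlt, hq4⟩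
      · rintro ⟨hax, -, q, hq1, -, hq3, hq4⟩
        refine ⟨hax, le_top, ?_⟩
        by_cases hFaMem : F a
        · by_cases hFq : F q
          · exact ⟨q, hq1, le_top, (key q a hq1 hua).mpr (Or.inr ⟨iff_of_true hFq hFaMem, hq3⟩),
              hq4⟩
          · obtain ⟨a1, ⟨ha1, ha1x⟩, hmin⟩ :=
              exists_first_among Ga u r (fun b => b ≤ x) ⟨a, hua, hax.lt.le⟩
            have hFa1 : F a1 := star_u x ⟨a, hua, hax.lt.le, hFaMem⟩ a1 ha1 ha1x hmin
            have hqa : q ≠ a := fun e => Ga.irrefl u r a (e ▸ hq3)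
            have hne : a ≠ a1 := by
              rintro rfl
              exact no_cycle Ga hq3 (hmin q hq1 hq4.le hqa)
            have hlt : Ga.lt u r a1 a := hmin a hua hax.lt.le hne
            have ha1ltx : a1 < x := atom_lt_of_between ha1 ha1x hua.lt hax.lt
            exact ⟨a1, ha1, le_top,
              (key a1 a ha1 hua).mpr (Or.inr ⟨iff_of_true hFa1 hFaMem, hlt⟩), ha1ltx⟩
        · by_cases hFq : F q
          · exact ⟨q, hq1, le_top, (key q a hq1 hua).mpr (Or.inl ⟨hFq, hFaMem⟩), hq4⟩
          · exact ⟨q, hq1, le_top,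
              (key q a hq1 hua).mpr (Or.inr ⟨iff_of_false hFq hFaMem, hq3⟩), hq4⟩
    have keyA : ∀ x y, a ⋖ x → a ⋖ y →
        (Ga'.lt a (r ++ [a]) x y ↔ (Fa x ∧ ¬ Fa y) ∨ ((Fa x ↔ Fa y) ∧ Ga.lt a (r ++ [a]) x y)) := by
      intro x y hx hy
      rw [hreKey x y hx hy, hinv x, hinv y]
    have starA : ∀ w, (∃ s, a ⋖ s ∧ s ≤ w ∧ Fa s) → ∀ a1, a ⋖ a1 → a1 ≤ w →
        (∀ b, a ⋖ b → b ≤ w → b ≠ a1 → Ga.lt a (r ++ [a]) a1 b) → Fa a1 :=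
      fun w hs a1 h1 h1w hmin => star Ga hGu hGa hua hs h1 h1w hmin
    refine ⟨Fa, keyA, starA, ?_⟩
    -- condition (ii) for Ga' at (a, r ++ [a])
    intro ai aj y hai haj hlt' hay hjy
    obtain ⟨a1, ⟨ha1, ha1y⟩, hmin1⟩ :=
      exists_first_among Ga a (r ++ [a]) (fun b => b ≤ y) ⟨ai, hai, hay.le⟩
    have ha1lty : a1 < y := atom_lt_of_between ha1 ha1y hai.lt hay
    by_cases hFaj : Fa aj
    · -- aj ∈ F: then ai ∈ F and Ga.lt ai aj; first atom a1 of [a,y] is in F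
      obtain ⟨hFai, hGlt⟩ : Fa ai ∧ Ga.lt a (r ++ [a]) ai aj := by
        rcases (keyA ai aj hai haj).mp hlt' with ⟨-, hn⟩ | ⟨hiff, hGlt⟩
        · exact absurd hFaj hn
        · exact ⟨hiff.mpr hFaj, hGlt⟩
      have hFa1 : Fa a1 := starA y ⟨ai, hai, hay.le, hFai⟩ a1 ha1 ha1y hmin1
      have haij : ai ≠ aj := fun e => Ga.irrefl _ _ _ (e ▸ hGlt)
      have hne : aj ≠ a1 := by
        rintro rfl
        exact no_cycle Ga hGlt (hmin1 ai hai hay.le haij)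
      have h1j : Ga.lt a (r ++ [a]) a1 aj := hmin1 aj haj hjy.le hne
      obtain ⟨ak, z, hak, hGakj, hjz, hzy, hakz⟩ :=
        grao_ii Ga hGa a1 aj y ha1 haj h1j ha1lty hjy
      obtain ⟨b1, ⟨hb1, hb1z⟩, hminz⟩ :=
        exists_first_among Ga a (r ++ [a]) (fun b => b ≤ z) ⟨aj, haj, hjz.le⟩
      have hFb1 : Fa b1 := starA z ⟨aj, haj, hjz.le, hFaj⟩ b1 hb1 hb1z hminz
      have hkj : ak ≠ aj := fun e => Ga.irrefl _ _ _ (e ▸ hGakj)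
      have hneb : aj ≠ b1 := by
        rintro rfl
        exact no_cycle Ga hGakj (hminz ak hak hakz.le hkj)
      have hb1j : Ga.lt a (r ++ [a]) b1 aj := hminz aj haj hjz.le hneb
      have hb1ltz : b1 < z := atom_lt_of_between hb1 hb1z haj.lt hjz.lt
      exact ⟨b1, z, hb1,
        (keyA b1 aj hb1 haj).mpr (Or.inr ⟨iff_of_true hFb1 hFaj, hb1j⟩), hjz, hzy, hb1ltz⟩
    · -- aj ∉ F
      rcases eq_or_ne aj a1 with rfl | hne
      · -- aj is the first atom of [a,y]: impossible
        exfalso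
        rcases (keyA ai aj hai haj).mp hlt' with ⟨hFai, -⟩ | ⟨-, hGlt⟩
        · exact hFaj (starA y ⟨ai, hai, hay.le, hFai⟩ aj ha1 ha1y hmin1)
        · have haij : ai ≠ aj := fun e => Ga.irrefl _ _ _ (e ▸ hGlt)
          exact no_cycle Ga hGlt (hmin1 ai hai hay.le haij)
      · have h1j : Ga.lt a (r ++ [a]) a1 aj := hmin1 aj haj hjy.le hne
        obtain ⟨ak, z, hak, hGakj, hjz, hzy, hakz⟩ :=
          grao_ii Ga hGa a1 aj y ha1 haj h1j ha1lty hjy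
        have : Ga'.lt a (r ++ [a]) ak aj := by
          by_cases hFk : Fa ak
          · exact (keyA ak aj hak haj).mpr (Or.inl ⟨hFk, hFaj⟩)
          · exact (keyA ak aj hak haj).mpr (Or.inr ⟨iff_of_false hFk hFaj, hGakj⟩)
        exact ⟨ak, z, hak, this, hjz, hzy, hakz⟩

end ReorderingProof

/-- Applying the atom reordering process (for any linear extension of the poset; the
result is characterized by `IsReordering` independently of the chosen extension) to a
generalized recursive atom ordering of a finite bounded poset yields a recursive atom
ordering. -/
theorem stmt_1 {α : Type*} [PartialOrder α] [BoundedOrder α] [Fintype α]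
    (Ga : ChainAtomOrdering α) (h : IsGRAO Ga ⊥ ⊤ [⊥])
    (Ga' : ChainAtomOrdering α) (hre : IsReordering Ga Ga') :
    IsRAO Ga' ⊥ ⊤ [⊥] := by
  have wf : WellFounded ((· > ·) : α → α → Prop) := (Finite.to_wellFoundedGT).wf
  suffices H : ∀ u : α, ∀ r, Root u r → IsRAO Ga' u ⊤ r from H ⊥ [⊥] Root.bot
  intro u
  induction u using WellFounded.induction wf with
  | _ u ih =>
    intro r hr
    refine IsRAO.step u ⊤ r ?_ ?_ ?_
    · intro b hb _
      exact ih b hb.lt (r ++ [b]) (hr.step hb)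
    · intro a b c ha _ hab _ hac _ hex hall
      refine (hre.2 r u a hr.satChain ha b c hab le_top hac le_top).mpr (Or.inl ⟨⟨hab, le_top, hex⟩, ?_⟩)
      rintro ⟨-, -, a', h1, h2, h3, h4⟩
      exact hall a' h1 h2 h3 h4
    · obtain ⟨F, key, st, ii'⟩ := master Ga Ga' hre h u r hr
      intro ai aj y h1 _ h2 _ h3 h4 h5 _
      obtain ⟨ak, z, hak, h6, h7, h8, h9⟩ := ii' ai aj y h1 h2 h3 h4 h5
      exact ⟨ak, z, hak, le_top, h6, h7, h8, h9⟩
end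

section
/- Let P be a finite bounded poset with a generalized recursive atom ordering Σ, and write a_1, …, a_t for the atoms of P in the Σ-order. Then for each j and each v ∈ P with a_j < v, either the Σ-first atom of [a_j,v]_{0̂⋖a_j} is greater than some atom a_i with i < j, or no atom of [a_j,v]_{0̂⋖a_j} is greater than any atom a_i with i < j. -/
/-- For a GRAO `S` of a finite bounded poset: for each atom `a` of the poset and each
`v > a`, either the `S`-first atom of `[a,v]_{⊥⋖a}` is greater than some atom of the
poset earlier than `a`, or no atom of `[a,v]_{⊥⋖a}` is greater than any atom earlier
than `a`. -/
theorem stmt_4 {α : Type*} [PartialOrder α] [BoundedOrder α] [Fintype α]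
    (S : ChainAtomOrdering α) (h : IsGRAO S ⊥ ⊤ [⊥])
    (a v : α) (ha : (⊥ : α) ⋖ a) (hav : a < v) :
    (∃ b, S.IsFirstAtom a v [⊥, a] b ∧
      ∃ a', (⊥ : α) ⋖ a' ∧ S.lt ⊥ [⊥] a' a ∧ a' < b) ∨
    (∀ b a', a ⋖ b → b ≤ v → (⊥ : α) ⋖ a' → S.lt ⊥ [⊥] a' a → ¬ a' < b) := by
  classical
  by_cases hR : ∀ b a', a ⋖ b → b ≤ v → (⊥ : α) ⋖ a' → S.lt ⊥ [⊥] a' a → ¬ a' < b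
  · exact Or.inr hR
  left
  push_neg at hR
  obtain ⟨b0, a0, hb0c, hb0v, ha0, ha0lt, ha0b0⟩ := hR
  -- the relation `S.lt a [⊥, a]` is well-founded (transitive + irreflexive on a finite type)
  have hwf : WellFounded (fun x y : α => S.lt a [⊥, a] x y) := by
    haveI : IsTrans α (fun x y : α => S.lt a [⊥, a] x y) :=
      ⟨fun x y z hxy hyz => S.trans _ _ _ _ _ hxy hyz⟩
    haveI : IsIrrefl α (fun x y : α => S.lt a [⊥, a] x y) := ⟨fun x => S.irrefl _ _ _⟩
    exact Finite.wellFounded_of_trans_of_irrefl _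
  set T : Set α :=
    {c | a ⋖ c ∧ c ≤ v ∧ ∃ a', (⊥ : α) ⋖ a' ∧ S.lt ⊥ [⊥] a' a ∧ a' < c} with hT
  obtain ⟨c, hcT, hcmin⟩ := hwf.has_min T ⟨b0, hb0c, hb0v, a0, ha0, ha0lt, ha0b0⟩
  obtain ⟨hac, hcv, a1, ha1, ha1lt, ha1c⟩ := hcT
  cases h with
  | base _ _ _ hbt =>
      exact absurd (lt_of_lt_of_le hav le_top) (hbt.2 ha.lt)
  | step _ _ _ ia ib ii =>
    -- a helper: two atoms of [a, ·] comparable are equal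
    have heq : ∀ x y : α, a ⋖ x → a ⋖ y → x ≤ y → x = y := by
      intro x y hx hy hxy
      rcases lt_or_eq_of_le hxy with h' | h'
      · exact absurd h' (hy.2 hx.lt)
      · exact h'
    have hfirst : ∀ d, a ⋖ d → d ≤ v → d ≠ c → S.lt a [⊥, a] c d := by
      intro d had hdv hdc
      by_contra hcd
      have hdltc : S.lt a [⊥, a] d c :=
        (S.total a [⊥, a] c d hac had (Ne.symm hdc)).resolve_left hcd
      have hcvne : c ≠ v := by
        rintro rfl
        exact hdc (heq d c had hac hdv)
      have hcltv : c < v := lt_of_le_of_ne hcv hcvne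
      have hA := ia a ha le_top
      cases hA with
      | base _ _ _ hat =>
          exact absurd (lt_of_lt_of_le hcltv le_top) (hat.2 hac.lt)
      | step _ _ _ ia2 ib2 ii2 =>
        have hdvne : d ≠ v := by
          rintro rfl
          exact hdc ((heq c d hac had hcv).symm)
        have hdltv : d < v := lt_of_le_of_ne hdv hdvne
        obtain ⟨ak, z, hak, -, haklt, hcz, hzv, hakz⟩ :=
          ii2 d c v had le_top hac le_top hdltc hdltv hcltv le_top
        have haklt' : S.lt a [⊥, a] ak c := haklt
        rcases ib a c z ha le_top hac hcz le_top with
          ⟨e, ⟨hae, hez, hemin⟩, a2, ha2, -, ha2lt, ha2e⟩ | hno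
        · by_cases hec : e = c
          · subst hec
            have hakne : ak ≠ e := by
              rintro rfl
              exact S.irrefl _ _ _ haklt'
            have h1 : S.lt a ([⊥] ++ [a]) e ak := hemin ak hak hakz.le hakne
            exact S.irrefl a ([⊥] ++ [a]) ak (S.trans _ _ _ _ _ haklt h1)
          · have heT : e ∈ T := ⟨hae, le_trans hez hzv, a2, ha2, ha2lt, ha2e⟩
            have h1 : S.lt a ([⊥] ++ [a]) e c := hemin c hac hcz.le (fun hh => hec hh.symm)
            exact hcmin e heT h1
        · exact hno c a1 hac hcz.le ha1 le_top ha1lt ha1c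
    exact ⟨c, ⟨hac, hcv, hfirst⟩, a1, ha1, ha1lt, ha1c⟩
end

section
/- Let Γ be a generalized recursive atom ordering of a finite bounded poset P, and let a_i, a_{i+1} be consecutive atoms (in the Γ-order) of a rooted interval [u,1̂]_r with the property that every rooted interval [u,w]_r containing both a_i and a_{i+1} has neither a_i nor a_{i+1} as its Γ-first atom. Then the chain-atom ordering Λ obtained from Γ by switching the order of a_i and a_{i+1} in the order on the atoms of [u,1̂]_r (leaving all other orders unchanged) is itself a generalized recursive atom ordering of P. -/
/-- Swapping two consecutive atoms `ai, aj` of a rooted interval `[u,⊤]_r` in a GRAO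
`Γ` of a finite bounded poset, where every rooted interval `[u,w]_r` containing both
`ai` and `aj` has neither as its `Γ`-first atom, yields a chain-atom ordering `Λ`
that is again a GRAO. -/
theorem stmt_6 {α : Type*} [PartialOrder α] [BoundedOrder α] [Fintype α] [DecidableEq α]
    (Ga La : ChainAtomOrdering α) (hGa : IsGRAO Ga ⊥ ⊤ [⊥])
    (u ai aj : α) (r : List α) (hr : SatChain (⊥ : α) u r)
    (hai : u ⋖ ai) (haj : u ⋖ aj) (hlt : Ga.lt u r ai aj)
    (hconsec : ∀ b, u ⋖ b → ¬ (Ga.lt u r ai b ∧ Ga.lt u r b aj))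
    (hnotfirst : ∀ w, ai ≤ w → aj ≤ w →
      ¬ Ga.IsFirstAtom u w r ai ∧ ¬ Ga.IsFirstAtom u w r aj)
    (hswap : ∀ x y, La.lt u r x y ↔ Ga.lt u r (Equiv.swap ai aj x) (Equiv.swap ai aj y))
    (hother : ∀ u' r', u' ≠ u ∨ r' ≠ r → ∀ x y, La.lt u' r' x y ↔ Ga.lt u' r' x y) :
    IsGRAO La ⊥ ⊤ [⊥] := by
  
  classical
  -- basic facts
  have hne : ai ≠ aj := fun h => Ga.irrefl u r aj (h ▸ hlt)
  have hji : ¬ Ga.lt u r aj ai := fun h => Ga.irrefl u r aj (Ga.trans _ _ _ _ _ h hlt)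
  -- if x is earlier than aj (and x ≠ ai) then x is earlier than ai (consecutiveness)
  have h_ai_of_aj : ∀ x, u ⋖ x → x ≠ ai → Ga.lt u r x aj → Ga.lt u r x ai := by
    intro x hx hxi h
    rcases Ga.total u r x ai hx hai hxi with h' | h'
    · exact h'
    · exact absurd ⟨h', h⟩ (hconsec x hx)
  -- if ai is earlier than x (and x ≠ aj) then aj is earlier than x
  have h_aj_of_ai : ∀ x, u ⋖ x → x ≠ aj → Ga.lt u r ai x → Ga.lt u r aj x := by
    intro x hx hxj h
    rcases Ga.total u r aj x haj hx (Ne.symm hxj) with h' | h'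
    · exact h'
    · exact absurd ⟨h, h'⟩ (hconsec x hx)
  -- characterizations of La.lt at the node (u, r)
  have laLtAj : ∀ x, La.lt u r x aj ↔ Ga.lt u r x ai := by
    intro x
    rw [hswap, Equiv.swap_apply_right]
    by_cases h1 : x = ai
    · subst x
      rw [Equiv.swap_apply_left]
      exact ⟨fun h => absurd h hji, fun h => absurd h (Ga.irrefl u r ai)⟩
    · by_cases h2 : x = aj
      · subst x
        rw [Equiv.swap_apply_right]
        exact ⟨fun h => absurd h (Ga.irrefl u r ai), fun h => absurd h hji⟩
      · rw [Equiv.swap_apply_of_ne_of_ne h1 h2]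
  have laLtAi : ∀ x, u ⋖ x → (La.lt u r x ai ↔ (x = aj ∨ Ga.lt u r x ai)) := by
    intro x hx
    rw [hswap, Equiv.swap_apply_left]
    by_cases h1 : x = aj
    · subst x
      rw [Equiv.swap_apply_right]
      simp [hlt]
    · by_cases h2 : x = ai
      · subst x
        rw [Equiv.swap_apply_left]
        constructor
        · intro h; exact absurd h (Ga.irrefl u r aj)
        · rintro (h | h)
          · exact absurd h h1
          · exact absurd h (Ga.irrefl u r ai)
      · rw [Equiv.swap_apply_of_ne_of_ne h2 h1]
        constructor
        · intro h; exact Or.inr (h_ai_of_aj x hx h2 h)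
        · rintro (h | h)
          · exact absurd h h1
          · exact Ga.trans _ _ _ _ _ h hlt
  have ltLeft : ∀ a, u ⋖ a → a ≠ ai → a ≠ aj → ∀ x, u ⋖ x →
      (La.lt u r x a ↔ Ga.lt u r x a) := by
    intro a ha hA hB x hx
    rw [hswap, Equiv.swap_apply_of_ne_of_ne hA hB]
    by_cases h1 : x = ai
    · subst x
      rw [Equiv.swap_apply_left]
      exact ⟨fun h => Ga.trans _ _ _ _ _ hlt h, fun h => h_aj_of_ai a ha hB h⟩
    · by_cases h2 : x = aj
      · subst x
        rw [Equiv.swap_apply_right]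
        exact ⟨fun h => h_aj_of_ai a ha hB h, fun h => Ga.trans _ _ _ _ _ hlt h⟩
      · rw [Equiv.swap_apply_of_ne_of_ne h1 h2]
  -- producing an atom strictly earlier than ai below intervals containing both
  have getEarlier : ∀ w, ai ≤ w → aj ≤ w → ∃ a, u ⋖ a ∧ a ≤ w ∧ Ga.lt u r a ai := by
    intro w hiw hjw
    by_contra hcon
    push_neg at hcon
    refine (hnotfirst w hiw hjw).1 ⟨hai, hiw, fun b hb hbw hbne => ?_⟩
    rcases Ga.total u r ai b hai hb (Ne.symm hbne) with h | h
    · exact h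
    · exact absurd h (hcon b hb hbw)
  have getEarlierLt : ∀ w, ai ≤ w → aj ≤ w → (ai < w ∨ aj < w) →
      ∃ a, u ⋖ a ∧ a < w ∧ Ga.lt u r a ai := by
    intro w hiw hjw hstr
    obtain ⟨a, ha1, ha2, ha3⟩ := getEarlier w hiw hjw
    refine ⟨a, ha1, lt_of_le_of_ne ha2 (fun e => ?_), ha3⟩
    subst e
    rcases hstr with h | h
    · exact ha1.2 hai.lt h
    · exact ha1.2 haj.lt h
  -- first atoms of Ga are first atoms of La
  have firstPres : ∀ w b, Ga.IsFirstAtom u w r b → La.IsFirstAtom u w r b := by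
    intro w b hb
    obtain ⟨hcb, hbw, hmin⟩ := hb
    by_cases hbi : b = ai
    · subst b
      have hjw : ¬ aj ≤ w := fun h => (hnotfirst w hbw h).1 ⟨hcb, hbw, hmin⟩
      refine ⟨hcb, hbw, fun x hx hxw hxne => ?_⟩
      have hxj : x ≠ aj := fun e => hjw (e ▸ hxw)
      rw [hswap, Equiv.swap_apply_left, Equiv.swap_apply_of_ne_of_ne hxne hxj]
      exact h_aj_of_ai x hx hxj (hmin x hx hxw hxne)
    · by_cases hbj : b = aj
      · subst b
        have hiw : ¬ ai ≤ w := fun h => hji (hmin ai hai h hne)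
        refine ⟨hcb, hbw, fun x hx hxw hxne => ?_⟩
        have hxi : x ≠ ai := fun e => hiw (e ▸ hxw)
        rw [hswap, Equiv.swap_apply_right, Equiv.swap_apply_of_ne_of_ne hxi hxne]
        have h1 : Ga.lt u r aj x := hmin x hx hxw hxne
        rcases Ga.total u r ai x hai hx (Ne.symm hxi) with h | h
        · exact h
        · exact absurd (Ga.trans _ _ _ _ _ h1 (Ga.trans _ _ _ _ _ h hlt))
            (Ga.irrefl u r aj)
      · refine ⟨hcb, hbw, fun x hx hxw hxne => ?_⟩
        rw [hswap, Equiv.swap_apply_of_ne_of_ne hbi hbj]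
        by_cases hxi : x = ai
        · subst x
          rw [Equiv.swap_apply_left]
          exact Ga.trans _ _ _ _ _ (hmin ai hai hxw hxne) hlt
        · by_cases hxj : x = aj
          · subst x
            rw [Equiv.swap_apply_right]
            have h1 : Ga.lt u r b aj := hmin aj haj hxw hxne
            rcases Ga.total u r b ai hcb hai hbi with h | h
            · exact h
            · exact absurd ⟨h, h1⟩ (hconsec b hcb)
          · rw [Equiv.swap_apply_of_ne_of_ne hxi hxj]
            exact hmin x hx hxw hxne
  have firstAny : ∀ u' r' w b, Ga.IsFirstAtom u' w r' b → La.IsFirstAtom u' w r' b := by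
    intro u' r' w b hb
    by_cases hk : u' = u ∧ r' = r
    · obtain ⟨rfl, rfl⟩ := hk
      exact firstPres w b hb
    · obtain ⟨h1, h2, h3⟩ := hb
      exact ⟨h1, h2, fun x hx hxw hxn =>
        (hother u' r' (not_and_or.mp hk) b x).mpr (h3 x hx hxw hxn)⟩
  -- the main transfer, by induction on the GRAO derivation
  suffices hmain : ∀ u0 v r0, IsGRAO Ga u0 v r0 → IsGRAO La u0 v r0 from
    hmain _ _ _ hGa
  intro u0 v r0 hG
  induction hG with
  | base u0 v r0 h => exact IsGRAO.base _ _ _ h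
  | step u0 v r0 ia ib ii ih =>
    by_cases hk : u0 = u ∧ r0 = r
    · obtain ⟨he1, he2⟩ := hk
      subst u0
      subst r0
      refine IsGRAO.step u v r (fun a h1 h2 => ih a h1 h2) ?_ ?_
      · -- condition (i)(b) at the node (u, r)
        intro a x w h1 h2 h3 h4 h5
        by_cases hA : a = ai
        · subst a
          rcases ib ai x w h1 h2 h3 h4 h5 with ⟨b, hbf, a', ha1, ha2, ha3, ha4⟩ | hc
          · exact Or.inl ⟨b, firstAny _ _ _ _ hbf, a', ha1, ha2,
              (laLtAi a' ha1).mpr (Or.inr ha3), ha4⟩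
          · by_cases hex : ∃ b, ai ⋖ b ∧ b ≤ w ∧ aj < b
            · exfalso
              obtain ⟨b, hb1, hb2, hb3⟩ := hex
              obtain ⟨a', ha1, ha2, ha3⟩ := getEarlierLt b hb1.le hb3.le (Or.inr hb3)
              exact hc b a' hb1 hb2 ha1 (ha2.le.trans (hb2.trans h5)) ha3 ha2
            · refine Or.inr (fun b a' hb1 hb2 hA1 hA2 hL hlt' => ?_)
              rcases (laLtAi a' hA1).mp hL with rfl | hg
              · exact hex ⟨b, hb1, hb2, hlt'⟩
              · exact hc b a' hb1 hb2 hA1 hA2 hg hlt'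
        · by_cases hB : a = aj
          · subst a
            rcases ib aj x w h1 h2 h3 h4 h5 with ⟨b, hbf, a', ha1, ha2, ha3, ha4⟩ | hc
            · by_cases hA' : a' = ai
              · subst a'
                obtain ⟨c, hc1, hc2, hc3⟩ :=
                  getEarlierLt b ha4.le hbf.1.lt.le (Or.inl ha4)
                exact Or.inl ⟨b, firstAny _ _ _ _ hbf, c, hc1,
                  hc2.le.trans (hbf.2.1.trans h5), (laLtAj c).mpr hc3, hc2⟩
              · exact Or.inl ⟨b, firstAny _ _ _ _ hbf, a', ha1, ha2,
                  (laLtAj a').mpr (h_ai_of_aj a' ha1 hA' ha3), ha4⟩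
            · refine Or.inr (fun b a' hb1 hb2 hA1 hA2 hL hlt' => ?_)
              exact hc b a' hb1 hb2 hA1 hA2
                (Ga.trans _ _ _ _ _ ((laLtAj a').mp hL) hlt) hlt'
          · rcases ib a x w h1 h2 h3 h4 h5 with ⟨b, hbf, a', ha1, ha2, ha3, ha4⟩ | hc
            · exact Or.inl ⟨b, firstAny _ _ _ _ hbf, a', ha1, ha2,
                (ltLeft a h1 hA hB a' ha1).mpr ha3, ha4⟩
            · exact Or.inr (fun b a' hb1 hb2 hA1 hA2 hL h' =>
                hc b a' hb1 hb2 hA1 hA2 ((ltLeft a h1 hA hB a' hA1).mp hL) h')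
      · -- condition (ii) at the node (u, r)
        intro bi bj y h1 h2 h3 h4 h5 h6 h7 h8
        by_cases hJ : bj = ai
        · subst bj
          rcases (laLtAi bi h1).mp h5 with rfl | hg
          · obtain ⟨c, hc1, hc2, hc3⟩ := getEarlierLt y h7.le h6.le (Or.inl h7)
            obtain ⟨ak, z, g1, g2, g3, g4, g5, g6⟩ :=
              ii c ai y hc1 (hc2.le.trans h8) h3 h4 hc3 hc2 h7 h8
            exact ⟨ak, z, g1, g2, (laLtAi ak g1).mpr (Or.inr g3), g4, g5, g6⟩
          · obtain ⟨ak, z, g1, g2, g3, g4, g5, g6⟩ :=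
              ii bi ai y h1 h2 h3 h4 hg h6 h7 h8
            exact ⟨ak, z, g1, g2, (laLtAi ak g1).mpr (Or.inr g3), g4, g5, g6⟩
        · by_cases hJ2 : bj = aj
          · subst bj
            have hg : Ga.lt u r bi ai := (laLtAj bi).mp h5
            obtain ⟨ak, z, g1, g2, g3, g4, g5, g6⟩ :=
              ii bi aj y h1 h2 h3 h4 (Ga.trans _ _ _ _ _ hg hlt) h6 h7 h8
            by_cases hK : ak = ai
            · subst ak
              obtain ⟨c, hc1, hc2, hc3⟩ := getEarlierLt z g6.le g4.lt.le (Or.inl g6)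
              exact ⟨c, z, hc1, hc2.le.trans (g5.trans h8), (laLtAj c).mpr hc3,
                g4, g5, hc2⟩
            · exact ⟨ak, z, g1, g2, (laLtAj ak).mpr (h_ai_of_aj ak g1 hK g3),
                g4, g5, g6⟩
          · by_cases hI : bi = ai
            · subst bi
              have h5' : Ga.lt u r aj bj := by
                rw [hswap, Equiv.swap_apply_left,
                  Equiv.swap_apply_of_ne_of_ne hJ hJ2] at h5
                exact h5
              obtain ⟨ak, z, g1, g2, g3, g4, g5, g6⟩ :=
                ii ai bj y h1 h2 h3 h4 (Ga.trans _ _ _ _ _ hlt h5') h6 h7 h8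
              exact ⟨ak, z, g1, g2, (ltLeft bj h3 hJ hJ2 ak g1).mpr g3, g4, g5, g6⟩
            · by_cases hI2 : bi = aj
              · subst bi
                have h5' : Ga.lt u r ai bj := by
                  rw [hswap, Equiv.swap_apply_right,
                    Equiv.swap_apply_of_ne_of_ne hJ hJ2] at h5
                  exact h5
                obtain ⟨ak, z, g1, g2, g3, g4, g5, g6⟩ :=
                  ii aj bj y h1 h2 h3 h4 (h_aj_of_ai bj h3 hJ2 h5') h6 h7 h8
                exact ⟨ak, z, g1, g2, (ltLeft bj h3 hJ hJ2 ak g1).mpr g3, g4, g5, g6⟩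
              · have h5' : Ga.lt u r bi bj := by
                  rw [hswap, Equiv.swap_apply_of_ne_of_ne hI hI2,
                    Equiv.swap_apply_of_ne_of_ne hJ hJ2] at h5
                  exact h5
                obtain ⟨ak, z, g1, g2, g3, g4, g5, g6⟩ :=
                  ii bi bj y h1 h2 h3 h4 h5' h6 h7 h8
                exact ⟨ak, z, g1, g2, (ltLeft bj h3 hJ hJ2 ak g1).mpr g3, g4, g5, g6⟩
    · -- away from the node (u, r): La agrees with Ga
      have heq : ∀ x y, La.lt u0 r0 x y ↔ Ga.lt u0 r0 x y :=
        hother u0 r0 (not_and_or.mp hk)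
      refine IsGRAO.step u0 v r0 (fun a h1 h2 => ih a h1 h2) ?_ ?_
      · intro a x w h1 h2 h3 h4 h5
        rcases ib a x w h1 h2 h3 h4 h5 with ⟨b, hbf, a', ha1, ha2, ha3, ha4⟩ | hc
        · exact Or.inl ⟨b, firstAny _ _ _ _ hbf, a', ha1, ha2, (heq a' a).mpr ha3, ha4⟩
        · exact Or.inr (fun b a' hb1 hb2 hb3 hb4 hb5 =>
            hc b a' hb1 hb2 hb3 hb4 ((heq a' a).mp hb5))
      · intro bi bj y h1 h2 h3 h4 h5 h6 h7 h8
        obtain ⟨ak, z, g1, g2, g3, g4, g5, g6⟩ :=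
          ii bi bj y h1 h2 h3 h4 ((heq bi bj).mp h5) h6 h7 h8
        exact ⟨ak, z, g1, g2, (heq ak bj).mpr g3, g4, g5, g6⟩
end

section
/- Let P be a finite bounded poset with a chain-atom ordering Λ, and let Γ be the chain-atom ordering of P obtained by applying the atom reordering process to Λ (with respect to a fixed linear extension of P). Then for every v ∈ P, the restriction of Γ to the interval [0̂,v] equals the chain-atom ordering of [0̂,v] obtained by applying the atom reordering process to the restriction of Λ to [0̂,v], computed with the induced linear extension (the restriction of the chosen linear extension of P to [0̂,v]). -/
/-- The atom reordering process commutes with restriction to lower intervals: if `Γ`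
is the reordering of `Λ` on all of the poset and `Γᵥ` is the reordering of the
restriction of `Λ` to `[⊥,v]` (with the induced linear extension; the results are
characterized by `IsReorderingOn` independently of the extensions), then `Γ` and `Γᵥ`
agree on the atoms of every rooted interval contained in `[⊥,v]`. -/
theorem stmt_7 {α : Type*} [PartialOrder α] [BoundedOrder α] [Fintype α]
    (La Ga : ChainAtomOrdering α) (hGa : IsReordering La Ga)
    (v : α) (Gav : ChainAtomOrdering α) (hGav : IsReorderingOn v La Gav) :
    ∀ u r a b, SatChain (⊥ : α) u r → u ⋖ a → a ≤ v → u ⋖ b → b ≤ v →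
      (Ga.lt u r a b ↔ Gav.lt u r a b) := by
  suffices key : ∀ (r : List α) (u a b : α), SatChain (⊥ : α) u r → u ⋖ a → a ≤ v →
      u ⋖ b → b ≤ v → (Ga.lt u r a b ↔ Gav.lt u r a b) by
    intro u r a b h1 h2 h3 h4 h5
    exact key r u a b h1 h2 h3 h4 h5
  intro r
  induction r using List.reverseRecOn with
  | nil =>
    intro u a b hchain
    simp [SatChain] at hchain
  | append_singleton s x ih =>
    intro u a b hchain ha hav hb hbv
    obtain ⟨hch, hhead, hlast⟩ := hchain
    have hx : u = x := by
      have h := hlast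
      simp only [List.getLast?_append, List.getLast?_singleton, Option.or_some, Option.some_or,
        Option.some.injEq] at h
      exact h.symm
    subst hx
    rcases eq_or_ne s [] with hs | hs
    · subst hs
      have hu : u = ⊥ := by simpa using hhead
      subst hu
      simp only [List.nil_append]
      rw [hGa.1 a b ha le_top hb le_top, hGav.1 a b ha hav hb hbv]
    · set uminus := s.getLast hs with huminus
      have hlasts : s.getLast? = some uminus := List.getLast?_eq_getLast hs
      obtain ⟨hch1, _, hR⟩ := List.isChain_append.mp hch
      have hcov : uminus ⋖ u := hR uminus hlasts u rfl
      have hheads : s.head? = some (⊥ : α) := by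
        rcases s with _ | ⟨y, t⟩
        · exact absurd rfl hs
        · simpa using hhead
      have hsat : SatChain (⊥ : α) uminus s := ⟨hch1, hheads, hlasts⟩
      have huv : u ≤ v := le_of_lt (lt_of_lt_of_le ha.lt hav)
      have memF_iff : ∀ c, u ⋖ c → c ≤ v →
          (MemF Ga uminus s u ⊤ c ↔ MemF Gav uminus s u v c) := by
        intro c hc hcv
        constructor
        · rintro ⟨-, -, u', hu'1, -, hu'3, hu'4⟩
          have hu'v : u' ≤ v := le_of_lt (lt_of_lt_of_le hu'4 hcv)
          exact ⟨hc, hcv, u', hu'1, hu'v,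
            (ih uminus u' u hsat hu'1 hu'v hcov huv).mp hu'3, hu'4⟩
        · rintro ⟨-, -, u', hu'1, hu'v, hu'3, hu'4⟩
          exact ⟨hc, le_top, u', hu'1, le_top,
            (ih uminus u' u hsat hu'1 hu'v hcov huv).mpr hu'3, hu'4⟩
      rw [hGa.2 s uminus u hsat hcov a b ha le_top hb le_top,
        hGav.2 s uminus u hsat hcov a b ha hav hb hbv,
        memF_iff a ha hav, memF_iff b hb hbv]
end

section
/- Let P be a finite bounded poset with a generalized recursive atom ordering Σ. Consider t, u, v ∈ P with t ⋖ u < v and a root r for [t,v] (a saturated chain from 0̂ to t). Then either the Σ-first atom of [u,v]_{r·u} (where r·u is r extended by the cover t ⋖ u) is greater than some atom of [t,v]_r that comes earlier than u in the Σ-order, or u is the Σ-first atom of [t,v]_r. -/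

private lemma catMin {α : Type*} [PartialOrder α] [DecidableEq α] (S : ChainAtomOrdering α)
    (u : α) (r : List α) (s : Finset α) (hs : s.Nonempty)
    (hcov : ∀ a ∈ s, u ⋖ a) :
    ∃ b ∈ s, ∀ c ∈ s, c ≠ b → S.lt u r b c := by
  classical
  induction s using Finset.induction_on with
  | empty => exact absurd hs (by simp)
  | @insert a s ha ih =>
    rcases s.eq_empty_or_nonempty with rfl | hne
    · refine ⟨a, by simp, ?_⟩
      intro c hc hcne
      simp at hc
      exact absurd hc hcne
    · obtain ⟨b, hb, hmin⟩ := ih hne (fun c hc => hcov c (Finset.mem_insert_of_mem hc))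
      have hab : a ≠ b := fun h => ha (h ▸ hb)
      have hca : u ⋖ a := hcov a (Finset.mem_insert_self a s)
      have hcb : u ⋖ b := hcov b (Finset.mem_insert_of_mem hb)
      rcases S.total u r a b hca hcb hab with hlt | hlt
      · refine ⟨a, Finset.mem_insert_self a s, ?_⟩
        intro c hc hcne
        rcases Finset.mem_insert.mp hc with rfl | hc
        · exact absurd rfl hcne
        · by_cases hcb' : c = b
          · exact hcb' ▸ hlt
          · exact S.trans u r a b c hlt (hmin c hc hcb')
      · refine ⟨b, Finset.mem_insert_of_mem hb, ?_⟩
        intro c hc hcne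
        rcases Finset.mem_insert.mp hc with rfl | hc
        · exact hlt
        · exact hmin c hc hcne

private lemma grao_along {α : Type*} [PartialOrder α] [BoundedOrder α]
    (S : ChainAtomOrdering α) :
    ∀ (l p : List α) (x : α), IsGRAO S x ⊤ (p ++ [x]) →
      (x :: l).Chain' (· ⋖ ·) →
      IsGRAO S ((x :: l).getLast (by simp)) ⊤ (p ++ x :: l) ∨
        (x :: l).getLast (by simp) = ⊤ := by
  intro l
  induction l with
  | nil =>
    intro p x hg _
    left
    simpa using hg
  | cons y l ih =>
    intro p x hg hch
    have hxy : x ⋖ y := (List.isChain_cons_cons.mp hch).1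
    have hch' : (y :: l).Chain' (· ⋖ ·) := (List.isChain_cons_cons.mp hch).2
    cases hg with
    | base _ _ _ hx =>
      have hy : y = ⊤ := by
        by_contra hne
        exact hx.2 hxy.1 (lt_of_le_of_ne le_top hne)
      subst hy
      cases l with
      | nil => right; simp
      | cons z l' =>
        have hz : (⊤ : α) ⋖ z := (List.isChain_cons_cons.mp hch').1
        exact absurd hz.1 (by simp)
    | step _ _ _ ia ib ii =>
      have h2 := ih (p ++ [x]) y (ia y hxy le_top) hch'
      have he : p ++ [x] ++ y :: l = p ++ x :: y :: l := by simp
      have hg' : ((x :: y :: l).getLast (by simp)) = ((y :: l).getLast (by simp)) :=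
        List.getLast_cons (by simp)
      rw [he] at h2
      rw [hg']
      exact h2

/-- For a GRAO `S` of a finite bounded poset: given `t ⋖ u < v` and a root `r` for
`[t,v]`, either the `S`-first atom of `[u,v]_{r·u}` is greater than some atom of
`[t,v]_r` earlier than `u`, or `u` is the `S`-first atom of `[t,v]_r`. -/
theorem stmt_8 {α : Type*} [PartialOrder α] [BoundedOrder α] [Fintype α]
    (S : ChainAtomOrdering α) (h : IsGRAO S ⊥ ⊤ [⊥])
    (t u v : α) (htu : t ⋖ u) (huv : u < v)
    (r : List α) (hr : SatChain (⊥ : α) t r) :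
    (∃ b, S.IsFirstAtom u v (r ++ [u]) b ∧
      ∃ u', t ⋖ u' ∧ u' ≤ v ∧ S.lt t r u' u ∧ u' < b) ∨
    S.IsFirstAtom t v r u := by
  classical
  obtain ⟨hch, hhead, hlast⟩ := hr
  obtain ⟨r0, l, rfl⟩ : ∃ (a : α) (l : List α), r = a :: l := by
    cases r with
    | nil => simp at hhead
    | cons a l => exact ⟨a, l, rfl⟩
  have hr0 : r0 = ⊥ := by simpa using hhead
  subst hr0
  have hlastv : (⊥ :: l).getLast (by simp) = t := by
    have := List.getLast?_eq_getLast (l := ⊥ :: l) (by simp)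
    rw [this] at hlast
    exact Option.some.inj hlast
  have htT : t ≠ ⊤ := fun h => absurd (htu.1.trans_le le_top) (by simp [h])
  have hGt : IsGRAO S t ⊤ (⊥ :: l) := by
    rcases grao_along S l [] ⊥ (by simpa using h) hch with h1 | h1
    · rw [hlastv] at h1; simpa using h1
    · rw [hlastv] at h1; exact absurd h1 htT
  by_cases hfirst : S.IsFirstAtom t v (⊥ :: l) u
  · right; exact hfirst
  · left
    obtain ⟨u₀, hcu₀, hu₀v, hu₀ne, hu₀nlt⟩ :
        ∃ b, t ⋖ b ∧ b ≤ v ∧ b ≠ u ∧ ¬ S.lt t (⊥ :: l) u b := by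
      by_contra hc
      push_neg at hc
      exact hfirst ⟨htu, huv.le, fun b h1 h2 h3 => hc b h1 h2 h3⟩
    have hu₀lt : S.lt t (⊥ :: l) u₀ u := by
      rcases S.total t (⊥ :: l) u u₀ htu hcu₀ (Ne.symm hu₀ne) with h1 | h1
      · exact absurd h1 hu₀nlt
      · exact h1
    have hu₀ltv : u₀ < v := by
      refine lt_of_le_of_ne hu₀v (fun hh => ?_)
      exact hcu₀.2 htu.1 (hh ▸ huv)
    cases hGt with
    | base _ _ _ hb => exact absurd (huv.trans_le le_top) (hb.2 htu.1)
    | step _ _ _ iaT ibT iiT =>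
      obtain ⟨ak, z, hcak, -, hakltu, huz, hzv, hakz⟩ :=
        iiT u₀ u v hcu₀ le_top htu le_top hu₀lt hu₀ltv huv le_top
      have hakv : ak ≤ v := hakz.le.trans hzv
      -- first atom b of [u,v]
      set ru : List α := (⊥ :: l) ++ [u] with hru
      obtain ⟨b, hbmem, hbmin⟩ := catMin S u ru
        (Finset.univ.filter (fun a => u ⋖ a ∧ a ≤ v))
        ⟨z, by simp [huz, hzv]⟩
        (fun a haa => ((Finset.mem_filter.mp haa).2).1)
      obtain ⟨hcb, hbv⟩ := (Finset.mem_filter.mp hbmem).2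
      have hbfirst : S.IsFirstAtom u v ru b := by
        refine ⟨hcb, hbv, fun c hc1 hc2 hc3 => ?_⟩
        exact hbmin c (by simp [hc1, hc2]) hc3
      -- minimal element z₀ of Z
      obtain ⟨z₀, hz₀mem, hz₀min⟩ := catMin S u ru
        (Finset.univ.filter (fun a => (u ⋖ a ∧ a ≤ v) ∧
          ∃ c, t ⋖ c ∧ c ≤ v ∧ S.lt t (⊥ :: l) c u ∧ c < a))
        ⟨z, by
          simp only [Finset.mem_filter, Finset.mem_univ, true_and]
          exact ⟨⟨huz, hzv⟩, ak, hcak, hakv, hakltu, hakz⟩⟩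
        (fun a haa => ((Finset.mem_filter.mp haa).2).1.1)
      obtain ⟨⟨hcz₀, hz₀v⟩, ak₀, hcak₀, hak₀v, hak₀lt, hak₀z₀⟩ :=
        (Finset.mem_filter.mp hz₀mem).2
      by_cases hbz : b = z₀
      · exact ⟨b, hbfirst, ak₀, hcak₀, hak₀v, hak₀lt, hbz ▸ hak₀z₀⟩
      exfalso
      have hltbz₀ : S.lt u ru b z₀ :=
        hbmin z₀ (by simp [hcz₀, hz₀v]) (Ne.symm hbz)
      have hz₀nev : z₀ ≠ v := by
        intro hh
        subst hh
        exact hcz₀.2 hcb.1 (lt_of_le_of_ne hbv hbz)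
      have hbnev : b ≠ v := by
        intro hh
        subst hh
        exact hcb.2 hcz₀.1 (lt_of_le_of_ne hz₀v hz₀nev)
      have hbltv : b < v := lt_of_le_of_ne hbv hbnev
      have hz₀ltv : z₀ < v := lt_of_le_of_ne hz₀v hz₀nev
      have hGu : IsGRAO S u ⊤ ru := iaT u htu le_top
      cases hGu with
      | base _ _ _ hb2 => exact hb2.2 hcb.1 (hbltv.trans_le le_top)
      | step _ _ _ iaU ibU iiU =>
        obtain ⟨e, z', hce, -, heltz₀, hz₀z', hz'v, hez'⟩ :=
          iiU b z₀ v hcb le_top hcz₀ le_top hltbz₀ hbltv hz₀ltv le_top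
        rcases ibT u z₀ z' htu le_top hcz₀ hz₀z' le_top with
          ⟨c, hcfirst, a', hca', -, ha'lt, ha'c⟩ | hno
        · -- c is first atom of [u,z'], lies above earlier atom a'
          have hcz' : c ≤ z' := hcfirst.2.1
          have hcv : c ≤ v := hcz'.trans hz'v
          have ha'v : a' ≤ v := ha'c.le.trans hcv
          have hcmemZ : c ∈ Finset.univ.filter (fun a => (u ⋖ a ∧ a ≤ v) ∧
              ∃ cc, t ⋖ cc ∧ cc ≤ v ∧ S.lt t (⊥ :: l) cc u ∧ cc < a) := by
            simp only [Finset.mem_filter, Finset.mem_univ, true_and]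
            exact ⟨⟨hcfirst.1, hcv⟩, a', hca', ha'v, ha'lt, ha'c⟩
          have hltcz₀ : S.lt u ru c z₀ := by
            by_cases hce' : c = e
            · exact hce' ▸ heltz₀
            · exact S.trans u ru c e z₀
                (hcfirst.2.2 e hce hez'.le (fun hh => hce' hh.symm)) heltz₀
          have hcnez₀ : c ≠ z₀ := fun hh => S.irrefl u ru z₀ (hh ▸ hltcz₀)
          exact S.irrefl u ru z₀
            (S.trans u ru z₀ c z₀ (hz₀min c hcmemZ hcnez₀) hltcz₀)
        · exact hno z₀ ak₀ hcz₀ hz₀z'.le hcak₀ le_top hak₀lt hak₀z₀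
end

section
/- If a finite bounded poset P admits a recursive atom ordering, then P admits a CC-labeling with the unique earliest (UE) property; in particular P is CC-shellable. -/
/-- The label sequence of a saturated chain, read from bottom to top.  Here
`lab r x y` is the label of the cover relation `x ⋖ y` with respect to the root `r`
(a saturated chain from `⊥` to `x` recorded as a list ending in `x`); this encodes a
chain-edge (CE-) labeling.  The first list argument is the root of the head of the
chain, the second is the chain itself. -/
def labelSeq {α Q : Type*} (lab : List α → α → α → Q) : List α → List α → List Q
  | _, [] => []
  | _, [_] => []
  | r, x :: y :: c => lab r x y :: labelSeq lab (r ++ [y]) (y :: c)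

/-- `u ⋖ v ⋖ w` is a topological ascent with respect to the root `r`: the label
sequence of `u ⋖ v ⋖ w` is lexicographically strictly smaller than that of every
other saturated chain from `u` to `w`. -/
def TopAscent {α Q : Type*} [PartialOrder α] [LinearOrder Q]
    (lab : List α → α → α → Q) (r : List α) (u v w : α) : Prop :=
  u ⋖ v ∧ v ⋖ w ∧ ∀ c, SatChain u w c → c ≠ [u, v, w] →
    List.Lex (· < ·) (labelSeq lab r [u, v, w]) (labelSeq lab r c)

/-- The saturated chain (second argument) is topologically ascending with respect to
the root given as first argument: every consecutive triple on it is a topological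
ascent (with respect to the appropriately extended root). -/
def TopAscending {α Q : Type*} [PartialOrder α] [LinearOrder Q]
    (lab : List α → α → α → Q) : List α → List α → Prop
  | r, u :: v :: w :: c => TopAscent lab r u v w ∧ TopAscending lab (r ++ [v]) (v :: w :: c)
  | _, _ => True

/-- `lab` is a CC-labeling: every rooted interval `[u,v]_r` has exactly one
topologically ascending saturated chain, distinct saturated chains of `[u,v]_r` have
distinct label sequences, and no label sequence is a prefix of another. -/
def IsCCLabeling {α Q : Type*} [PartialOrder α] [OrderBot α] [LinearOrder Q]
    (lab : List α → α → α → Q) : Prop :=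
  ∀ u v r, SatChain (⊥ : α) u r → u ≤ v →
    (∃! c, SatChain u v c ∧ TopAscending lab r c) ∧
    (∀ c c', SatChain u v c → SatChain u v c' → c ≠ c' →
      labelSeq lab r c ≠ labelSeq lab r c' ∧
      ¬ labelSeq lab r c <+: labelSeq lab r c')

/-- `lab` is a CL-labeling: every rooted interval `[u,v]_r` has exactly one saturated
chain with strictly increasing label sequence, and this label sequence is
lexicographically strictly smaller than that of every other saturated chain. -/
def IsCLLabeling {α Q : Type*} [PartialOrder α] [OrderBot α] [LinearOrder Q]
    (lab : List α → α → α → Q) : Prop :=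
  ∀ u v r, SatChain (⊥ : α) u r → u ≤ v →
    ∃ c, SatChain u v c ∧ List.Chain' (· < ·) (labelSeq lab r c) ∧
      (∀ c', SatChain u v c' → List.Chain' (· < ·) (labelSeq lab r c') → c' = c) ∧
      (∀ c', SatChain u v c' → c' ≠ c →
        List.Lex (· < ·) (labelSeq lab r c) (labelSeq lab r c'))

/-- `lab` is a topological CL-labeling: every rooted interval `[u,v]_r` has a unique
saturated chain with lexicographically smallest label sequence, and every other
saturated chain of `[u,v]_r` contains at least one topological descent (i.e. is not
topologically ascending). -/
def IsTopolCLLabeling {α Q : Type*} [PartialOrder α] [OrderBot α] [LinearOrder Q]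
    (lab : List α → α → α → Q) : Prop :=
  ∀ u v r, SatChain (⊥ : α) u r → u ≤ v →
    ∃ c, SatChain u v c ∧
      (∀ c', SatChain u v c' → c' ≠ c →
        List.Lex (· < ·) (labelSeq lab r c) (labelSeq lab r c')) ∧
      (∀ c', SatChain u v c' → c' ≠ c → ¬ TopAscending lab r c')

/-- `lab` has the unique earliest (UE) property: in each rooted interval `[u,v]_r`,
the smallest label on the cover relations upward from `u` occurs on only one such
cover relation. -/
def HasUE {α Q : Type*} [PartialOrder α] [OrderBot α] [LinearOrder Q]
    (lab : List α → α → α → Q) : Prop :=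
  ∀ u v r, SatChain (⊥ : α) u r → u ≤ v →
    ∀ a b, u ⋖ a → a ≤ v → u ⋖ b → b ≤ v →
      (∀ a', u ⋖ a' → a' ≤ v → lab r u a ≤ lab r u a') →
      (∀ a', u ⋖ a' → a' ≤ v → lab r u b ≤ lab r u a') → a = b

/-- `lab` is self-consistent: whenever `c₀` is the lexicographically strictly first
saturated chain of a rooted interval `[u,v]_r`, with `a` the atom on `c₀` and
`b ≠ a` another atom of `[u,v]_r`, then for every `v'` above both `a` and `b`, every
saturated chain of `[u,v']_r` through `b` is lexicographically later than every
saturated chain of `[u,v']_r` through `a`. -/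
def SelfConsistent {α Q : Type*} [PartialOrder α] [OrderBot α] [LinearOrder Q]
    (lab : List α → α → α → Q) : Prop :=
  ∀ u v r, SatChain (⊥ : α) u r → ∀ c₀, SatChain u v c₀ →
    (∀ c, SatChain u v c → c ≠ c₀ →
      List.Lex (· < ·) (labelSeq lab r c₀) (labelSeq lab r c)) →
    ∀ a, u ⋖ a → a ∈ c₀ →
    ∀ b, u ⋖ b → b ≤ v → b ≠ a →
    ∀ v', a ≤ v' → b ≤ v' →
    ∀ ca cb, SatChain u v' ca → a ∈ ca → SatChain u v' cb → b ∈ cb →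
      List.Lex (· < ·) (labelSeq lab r ca) (labelSeq lab r cb)


/-! ### Auxiliary development -/

section Aux

open List

variable {α : Type*} [PartialOrder α]

/-- The rank labeling associated to a chain-atom ordering: the label of the
cover `x ⋖ y` with respect to root `r` is the number of atoms of `[x, ⊤]_r`
strictly earlier than `y`. -/
noncomputable def rlab (S : ChainAtomOrdering α) : List α → α → α → ℕ :=
  fun r x y => Set.ncard {b | x ⋖ b ∧ S.lt x r b y}

variable {S : ChainAtomOrdering α}

lemma rlab_lt [Fintype α] {r : List α} {x a b : α} (ha : x ⋖ a) (hb : x ⋖ b)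
    (h : S.lt x r a b) : rlab S r x a < rlab S r x b := by
  apply Set.ncard_lt_ncard _ (Set.toFinite _)
  constructor
  · rintro c ⟨hc1, hc2⟩
    exact ⟨hc1, S.trans _ _ _ _ _ hc2 h⟩
  · intro hsub
    have : a ∈ {b_1 | x ⋖ b_1 ∧ S.lt x r b_1 b} := ⟨ha, h⟩
    exact S.irrefl _ _ _ (hsub this).2

lemma rlab_inj [Fintype α] {r : List α} {x a b : α} (ha : x ⋖ a) (hb : x ⋖ b)
    (h : rlab S r x a = rlab S r x b) : a = b := by
  by_contra hne
  rcases S.total x r a b ha hb hne with h' | h'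
  · exact absurd h (Nat.ne_of_lt (rlab_lt ha hb h'))
  · exact absurd h.symm (Nat.ne_of_lt (rlab_lt hb ha h'))

lemma slt_of_rlab_lt [Fintype α] {r : List α} {x a b : α} (ha : x ⋖ a) (hb : x ⋖ b)
    (h : rlab S r x a < rlab S r x b) : S.lt x r a b := by
  have hne : a ≠ b := by rintro rfl; exact absurd h (lt_irrefl _)
  rcases S.total x r a b ha hb hne with h' | h'
  · exact h'
  · exact absurd (rlab_lt hb ha h') (by omega)

/-! #### Saturated chain lemmas -/

lemma satChain_head {u v : α} {c : List α} (h : SatChain u v c) : ∃ t, c = u :: t := by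
  obtain ⟨-, h2, -⟩ := h
  cases c with
  | nil => simp at h2
  | cons x t => simp_all

lemma chain'_lt_of_chain'_covBy {c : List α} (h : c.Chain' (· ⋖ ·)) :
    c.Chain' (· < ·) := h.imp (fun _ _ h => h.lt)

lemma mem_le_getLast : ∀ {c : List α} {v : α}, c.Chain' (· < ·) → c.getLast? = some v →
    ∀ x ∈ c, x ≤ v
  | [], _, _, h2, _, hx => by simp at hx
  | [a], v, _, h2, x, hx => by
      simp at h2 hx; subst h2; subst hx; rfl
  | a :: b :: t, v, h1, h2, x, hx => by
      rw [List.getLast?_cons_cons] at h2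
      have hbt : (b :: t).Chain' (· < ·) := h1.tail
      have hab : a < b := List.isChain_cons_cons.mp h1 |>.1
      rcases List.mem_cons.mp hx with rfl | hx'
      · exact le_of_lt (lt_of_lt_of_le hab (mem_le_getLast hbt h2 b List.mem_cons_self))
      · exact mem_le_getLast hbt h2 x hx'

lemma satChain_mem_le {u v : α} {c : List α} (h : SatChain u v c) : ∀ x ∈ c, x ≤ v :=
  mem_le_getLast (chain'_lt_of_chain'_covBy h.1) h.2.2

lemma satChain_cons {u v x y : α} {t : List α} (h : SatChain u v (x :: y :: t)) :
    x = u ∧ x ⋖ y ∧ SatChain y v (y :: t) := by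
  obtain ⟨h1, h2, h3⟩ := h
  simp only [List.head?_cons, Option.some.injEq] at h2
  rw [List.getLast?_cons_cons] at h3
  exact ⟨h2, (List.isChain_cons_cons.mp h1).1, (List.isChain_cons_cons.mp h1).2, by simp, h3⟩

lemma satChain_single {u v : α} (h : SatChain u v [u]) : u = v := by
  obtain ⟨-, -, h3⟩ := h; simpa using h3

lemma satChain_self (u : α) : SatChain u u [u] := ⟨List.isChain_singleton _, by simp, by simp⟩

lemma satChain_pair {u v : α} (h : u ⋖ v) : SatChain u v [u, v] :=
  ⟨List.isChain_pair.mpr h, by simp, by simp⟩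

lemma satChain_cons_of_covBy {u a v : α} {t : List α} (hc : u ⋖ a)
    (h : SatChain a v (a :: t)) : SatChain u v (u :: a :: t) := by
  obtain ⟨h1, -, h3⟩ := h
  exact ⟨List.isChain_cons_cons.mpr ⟨hc, h1⟩, by simp, by rw [List.getLast?_cons_cons]; exact h3⟩

lemma satChain_cover {u w : α} {c : List α} (hc : u ⋖ w) (h : SatChain u w c) :
    c = [u, w] := by
  obtain ⟨t, rfl⟩ := satChain_head h
  cases t with
  | nil => exact absurd (satChain_single h) (ne_of_lt hc.lt)
  | cons y t' =>
    obtain ⟨-, huy, hyt⟩ := satChain_cons h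
    have hyw : y ≤ w := satChain_mem_le h y (by simp)
    have : y = w := by
      rcases lt_or_eq_of_le hyw with h' | h'
      · exact absurd h' (hc.2 huy.lt)
      · exact h'
    subst this
    cases t' with
    | nil => rfl
    | cons z t'' =>
      obtain ⟨-, hwz, hzt⟩ := satChain_cons hyt
      exact absurd (satChain_mem_le hyt z (by simp)) (not_le_of_gt hwz.lt)

/-! #### Existence of first atoms -/

lemma exists_covBy_le [Fintype α] {u v : α} (h : u < v) : ∃ a, u ⋖ a ∧ a ≤ v := by
  classical
  have hne : ((Set.Ioc u v).toFinset).Nonempty := by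
    simp only [Set.toFinset_nonempty]
    exact ⟨v, h, le_refl v⟩
  obtain ⟨m, hm, hmin⟩ := Finset.exists_minimal hne
  rw [Set.mem_toFinset, Set.mem_Ioc] at hm
  refine ⟨m, ⟨hm.1, fun t ht1 ht2 => ?_⟩, hm.2⟩
  exact lt_irrefl _ (lt_of_lt_of_le ht2 (hmin (by show t ∈ _; rw [Set.mem_toFinset, Set.mem_Ioc]; exact ⟨ht1, le_of_lt (lt_of_lt_of_le ht2 hm.2)⟩) ht2.le))

lemma exists_firstAtom [Fintype α] (S : ChainAtomOrdering α) {u v : α} (r : List α)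
    (h : u < v) : ∃ a, S.IsFirstAtom u v r a := by
  classical
  have hne : ({a | u ⋖ a ∧ a ≤ v}.toFinset).Nonempty := by
    simp only [Set.toFinset_nonempty]
    exact exists_covBy_le h
  obtain ⟨a, ha, hmin⟩ := Finset.exists_min_image _ (rlab S r u) hne
  rw [Set.mem_toFinset, Set.mem_setOf_eq] at ha
  refine ⟨a, ha.1, ha.2, fun b hb1 hb2 hb3 => ?_⟩
  have hle : rlab S r u a ≤ rlab S r u b :=
    hmin b (by rw [Set.mem_toFinset, Set.mem_setOf_eq]; exact ⟨hb1, hb2⟩)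
  have hne' : rlab S r u a ≠ rlab S r u b := fun hEq => hb3 (rlab_inj hb1 ha.1 hEq.symm)
  exact slt_of_rlab_lt ha.1 hb1 (lt_of_le_of_ne hle hne')

lemma firstAtom_unique {u v : α} {r : List α} {a b : α}
    (ha : S.IsFirstAtom u v r a) (hb : S.IsFirstAtom u v r b) : a = b := by
  by_contra hne
  exact S.irrefl u r a
    (S.trans _ _ _ _ _ (ha.2.2 b hb.1 hb.2.1 (Ne.symm hne)) (hb.2.2 a ha.1 ha.2.1 hne))

/-! #### RAO restriction lemmas -/

lemma isRAO_self (S : ChainAtomOrdering α) (u : α) (r : List α) : IsRAO S u u r := by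
  refine IsRAO.step u u r ?_ ?_ ?_
  · intro a ha hle; exact absurd (lt_of_lt_of_le ha.lt hle) (lt_irrefl u)
  · intro a b c ha hle _ _ _ _ _ _
    exact absurd (lt_of_lt_of_le ha.lt hle) (lt_irrefl u)
  · intro ai aj y hi hile _ _ _ _ _ _
    exact absurd (lt_of_lt_of_le hi.lt hile) (lt_irrefl u)

lemma isRAO_atom {u v a : α} {r : List α} (h : IsRAO S u v r) (ha : u ⋖ a) (hav : a ≤ v) :
    IsRAO S a v (r ++ [a]) := by
  cases h with
  | base _ _ _ hc =>
    have : a = v := by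
      rcases lt_or_eq_of_le hav with h' | h'
      · exact absurd h' (hc.2 ha.lt)
      · exact h'
    subst this
    exact isRAO_self S a (r ++ [a])
  | step _ _ _ ia ib ii => exact ia a ha hav

lemma isRAO_shrink {u w : α} {r : List α} (h : IsRAO S u w r) :
    ∀ v, u ≤ v → v ≤ w → IsRAO S u v r := by
  induction h with
  | base u w r hc =>
    intro v huv hvw
    rcases lt_or_eq_of_le huv with h' | h'
    · have : v = w := by
        rcases lt_or_eq_of_le hvw with h'' | h''
        · exact absurd h'' (hc.2 h')
        · exact h''
      subst this
      exact IsRAO.base u v r hc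
    · subst h'; exact isRAO_self S u r
  | step u w r ia ib ii ih =>
    intro v huv hvw
    refine IsRAO.step u v r ?_ ?_ ?_
    · intro a ha hav
      exact ih a ha (le_trans hav hvw) v hav hvw
    · intro a b c ha hav hab hbv hac hcv hex hall
      refine ib a b c ha (le_trans hav hvw) hab (le_trans hbv hvw) hac (le_trans hcv hvw)
        ?_ ?_
      · obtain ⟨a', h1, h2, h3, h4⟩ := hex
        exact ⟨a', h1, le_trans h2 hvw, h3, h4⟩
      · intro a' h1 h2 h3 hlt
        exact hall a' h1 (le_trans (le_of_lt hlt) hcv) h3 hlt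
    · intro ai aj y hi hiv hj hjv hij hiy hjy hyv
      obtain ⟨ak, z, h1, h2, h3, h4, h5, h6⟩ :=
        ii ai aj y hi (le_trans hiv hvw) hj (le_trans hjv hvw) hij hiy hjy (le_trans hyv hvw)
      exact ⟨ak, z, h1, le_trans (le_of_lt h6) (le_trans h5 hyv), h3, h4, h5, h6⟩

lemma isRAO_extend [OrderTop α] :
    ∀ (c : List α) (u w : α) (r : List α), IsRAO S u ⊤ r → SatChain u w (u :: c) →
    IsRAO S w ⊤ (r ++ c)
  | [], u, w, r, h, hc => by
      have := satChain_single hc; subst this; simpa using h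
  | a :: c', u, w, r, h, hc => by
      obtain ⟨-, hua, hc'⟩ := satChain_cons hc
      have h2 : IsRAO S a ⊤ (r ++ [a]) := isRAO_atom h hua le_top
      have := isRAO_extend c' a w (r ++ [a]) h2 hc'
      simpa [List.append_assoc] using this

lemma isRAO_of_root [OrderTop α] [OrderBot α] (hS : IsRAO S ⊥ ⊤ [⊥]) {u v : α} {r : List α}
    (hr : SatChain ⊥ u r) (huv : u ≤ v) : IsRAO S u v r := by
  obtain ⟨t, rfl⟩ := satChain_head hr
  have h1 : IsRAO S u ⊤ ([⊥] ++ t) := isRAO_extend t ⊥ u [⊥] hS hr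
  exact isRAO_shrink (by simpa using h1) v huv le_top

/-! #### Greedy (lexicographically first) chains -/

/-- The greedy saturated chain of a rooted interval: at each step take the
`S`-first atom of the remaining interval. -/
inductive Greedy (S : ChainAtomOrdering α) : List α → α → α → List α → Prop
  | nil (r : List α) (u : α) : Greedy S r u u [u]
  | cons (r : List α) (u v a : α) (c : List α) (h : S.IsFirstAtom u v r a)
      (hc : Greedy S (r ++ [a]) a v c) : Greedy S r u v (u :: c)

lemma greedy_head {r : List α} {u v : α} {c : List α} (h : Greedy S r u v c) :
    ∃ t, c = u :: t := by
  cases h with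
  | nil => exact ⟨[], rfl⟩
  | cons _ _ _ _ c _ _ => exact ⟨c, rfl⟩

lemma greedy_satChain {r : List α} {u v : α} {c : List α} (h : Greedy S r u v c) :
    SatChain u v c := by
  induction h with
  | nil r u => exact satChain_self u
  | cons r u v a c hfa hgr ih =>
    obtain ⟨t, rfl⟩ := greedy_head hgr
    exact satChain_cons_of_covBy hfa.1 ih

lemma greedy_unique {r : List α} {u v : α} {c : List α} (h : Greedy S r u v c) :
    ∀ c', Greedy S r u v c' → c = c' := by
  induction h with
  | nil r u =>
    intro c' h'
    cases h' with
    | nil => rfl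
    | cons _ _ _ a _ hfa _ =>
      exact absurd (lt_of_lt_of_le hfa.1.lt hfa.2.1) (lt_irrefl u)
  | cons r u v a c hfa hgr ih =>
    intro c' h'
    cases h' with
    | nil =>
      exact absurd (lt_of_lt_of_le hfa.1.lt hfa.2.1) (lt_irrefl u)
    | cons _ _ _ a' c'' hfa' hgr' =>
      have : a = a' := firstAtom_unique hfa hfa'
      subst this
      rw [ih c'' hgr']

lemma greedy_exists [Fintype α] (S : ChainAtomOrdering α) :
    ∀ (n : ℕ) (u v : α) (r : List α), u ≤ v → (Set.Ioc u v).ncard ≤ n →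
    ∃ c, Greedy S r u v c := by
  intro n
  induction n with
  | zero =>
    intro u v r huv hn
    rcases lt_or_eq_of_le huv with h' | h'
    · exfalso
      have : (Set.Ioc u v).Nonempty := ⟨v, h', le_refl v⟩
      have := Set.ncard_pos (Set.toFinite _) |>.mpr this
      omega
    · subst h'; exact ⟨[u], Greedy.nil r u⟩
  | succ n ih =>
    intro u v r huv hn
    rcases lt_or_eq_of_le huv with h' | h'
    · obtain ⟨a, hfa⟩ := exists_firstAtom S r h'
      have hss : Set.Ioc a v ⊂ Set.Ioc u v := by
        constructor
        · rintro x ⟨h1, h2⟩; exact ⟨lt_trans hfa.1.lt h1, h2⟩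
        · intro hsub
          have : a ∈ Set.Ioc u v := ⟨hfa.1.lt, hfa.2.1⟩
          exact absurd (hsub this).1 (lt_irrefl a)
      have hcard : (Set.Ioc a v).ncard < (Set.Ioc u v).ncard :=
        Set.ncard_lt_ncard hss (Set.toFinite _)
      obtain ⟨c, hc⟩ := ih a v (r ++ [a]) hfa.2.1 (by omega)
      exact ⟨u :: c, Greedy.cons r u v a c hfa hc⟩
    · subst h'; exact ⟨[u], Greedy.nil r u⟩

lemma exists_satChain [Fintype α] (S : ChainAtomOrdering α) {u v : α} (huv : u ≤ v) :
    ∃ c, SatChain u v c := by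
  obtain ⟨c, hc⟩ := greedy_exists S (Set.Ioc u v).ncard u v [] huv (le_refl _)
  exact ⟨c, greedy_satChain hc⟩

/-! #### The greedy chain is topologically ascending -/

lemma labelSeq_cons {Q : Type*} (lab : List α → α → α → Q) (r : List α) (x y : α)
    (c : List α) : labelSeq lab r (x :: y :: c) = lab r x y :: labelSeq lab (r ++ [y]) (y :: c) :=
  rfl

lemma topAscending_short {Q : Type*} [LinearOrder Q] (lab : List α → α → α → Q)
    (r : List α) (c : List α) (h : c.length ≤ 2) : TopAscending lab r c := by
  match c with
  | [] => trivial
  | [x] => trivial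
  | [x, y] => trivial
  | x :: y :: z :: t => simp at h

lemma topAscending_cons {Q : Type*} [LinearOrder Q] {lab : List α → α → α → Q}
    {r : List α} {u v w : α} {c : List α} :
    TopAscending lab r (u :: v :: w :: c) ↔
      TopAscent lab r u v w ∧ TopAscending lab (r ++ [v]) (v :: w :: c) := Iff.rfl


lemma lex_cons_le {x y : ℕ} {X Y : List ℕ} (h : List.Lex (· < ·) (x :: X) (y :: Y)) :
    x ≤ y := by
  cases h with
  | rel h' => exact le_of_lt h'
  | cons _ => exact le_refl _

lemma greedy_topAscent [Fintype α] {r : List α} {u v a w : α}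
    (hfa : S.IsFirstAtom u v r a) (haw : a ⋖ w) (hwv : w ≤ v) :
    TopAscent (rlab S) r u a w := by
  refine ⟨hfa.1, haw, fun d hd hne => ?_⟩
  obtain ⟨t, rfl⟩ := satChain_head hd
  cases t with
  | nil =>
    exact absurd (satChain_single hd) (ne_of_lt (lt_trans hfa.1.lt haw.lt))
  | cons y t' =>
    obtain ⟨-, huy, hyt⟩ := satChain_cons hd
    by_cases hya : y = a
    · subst hya
      have := satChain_cover haw hyt
      rw [this] at hne
      exact absurd rfl hne
    · have hyw : y ≤ w := satChain_mem_le hd y (by simp)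
      have hslt : S.lt u r a y := hfa.2.2 y huy (le_trans hyw hwv) hya
      rw [labelSeq_cons, labelSeq_cons]
      exact List.Lex.rel (rlab_lt hfa.1 huy hslt)

lemma greedy_topAscending [Fintype α] {r : List α} {u v : α} {c : List α}
    (h : Greedy S r u v c) : TopAscending (rlab S) r c := by
  induction h with
  | nil r u => trivial
  | cons r u v a c hfa hgr ih =>
    obtain ⟨t, rfl⟩ := greedy_head hgr
    cases t with
    | nil => trivial
    | cons w t' =>
      obtain ⟨-, haw, hwt⟩ := satChain_cons (greedy_satChain hgr)
      have hwv : w ≤ v := satChain_mem_le (greedy_satChain hgr) w (by simp)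
      exact topAscending_cons.mpr ⟨greedy_topAscent hfa haw hwv, ih⟩

/-! #### Topologically ascending chains are greedy -/

lemma ascending_greedy [Fintype α] {v : α} :
    ∀ (c : List α) (u : α) (r : List α), IsRAO S u v r → SatChain u v c →
      TopAscending (rlab S) r c → Greedy S r u v c := by
  intro c
  induction c with
  | nil => intro u r _ hc; obtain ⟨t, ht⟩ := satChain_head hc; simp at ht
  | cons x cs ih =>
    intro u r hRAO hc hasc
    have hxu : u = x := by have := hc.2.1; simpa using this.symm
    subst hxu
    cases cs with
    | nil =>
      have := satChain_single hc; subst this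
      exact Greedy.nil r u
    | cons a cs' =>
      obtain ⟨-, hua, hta⟩ := satChain_cons hc
      have hav : a ≤ v := satChain_mem_le hc a (by simp)
      cases cs' with
      | nil =>
        -- c = [u, a] with a = v
        have hva : a = v := satChain_single hta
        subst hva
        refine Greedy.cons r u a a [a] ⟨hua, le_refl a, fun b hb1 hb2 hb3 => ?_⟩
          (Greedy.nil _ a)
        exact absurd (lt_of_le_of_ne hb2 hb3) (hua.2 hb1.lt)
      | cons w rest =>
        obtain ⟨-, haw, hwt⟩ := satChain_cons hta
        have hwv : w ≤ v := satChain_mem_le hta w (by simp)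
        have hav' : a < v := lt_of_lt_of_le haw.lt hwv
        -- the inner RAO must be a step
        cases hRAO with
        | base _ _ _ hcov => exact absurd hav' (hcov.2 hua.lt)
        | step _ _ _ ia ib ii =>
          obtain ⟨hasc1, hasc2⟩ := topAscending_cons.mp hasc
          have hRAOa : IsRAO S a v (r ++ [a]) := ia a hua hav
          have hgr_tail : Greedy S (r ++ [a]) a v (a :: w :: rest) :=
            ih a (r ++ [a]) hRAOa hta hasc2
          -- w is the first atom of [a,v]
          have hfw : S.IsFirstAtom a v (r ++ [a]) w := by
            cases hgr_tail with
            | cons _ _ _ a2 c2 hfa2 hgr2 =>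
              obtain ⟨t2, ht2⟩ := greedy_head hgr2
              have ha2w : a2 = w := by
                have := congrArg List.head? ht2
                simpa using this.symm
              subst ha2w
              exact hfa2
          -- premise: no earlier atom lies below w
          have hprem : ∀ a', u ⋖ a' → a' ≤ v → S.lt u r a' a → ¬ a' < w := by
            intro a' h1 h2 h3 hlt
            obtain ⟨d, hd⟩ := exists_satChain S (le_of_lt hlt)
            obtain ⟨td, rfl⟩ := satChain_head hd
            have hd' : SatChain u w (u :: a' :: td) := satChain_cons_of_covBy h1 hd
            have hne : u :: a' :: td ≠ [u, a, w] := by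
              intro hEq
              injection hEq with _ hEq2
              injection hEq2 with hEq3 _
              exact S.irrefl u r a' (hEq3 ▸ h3)
            have hlex := hasc1.2.2 (u :: a' :: td) hd' hne
            rw [labelSeq_cons, labelSeq_cons] at hlex
            have hle := lex_cons_le hlex
            have := rlab_lt h1 hua h3
            omega
          -- a is the first atom of [u,v]
          have hfa : S.IsFirstAtom u v r a := by
            refine ⟨hua, hav, fun b hb1 hb2 hb3 => ?_⟩
            by_contra hnab
            have hba : S.lt u r b a := by
              rcases S.total u r b a hb1 hua hb3 with h' | h'
              · exact h'
              · exact absurd h' hnab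
            have hbv : b < v := by
              rcases lt_or_eq_of_le hb2 with h' | h'
              · exact h'
              · subst h'; exact absurd hav' (hb1.2 hua.lt)
            obtain ⟨ak, z, hk1, hk2, hk3, hk4, hk5, hk6⟩ :=
              ii b a v hb1 hb2 hua hav hba hbv hav' (le_refl v)
            -- apply (i)(b) with b := z, c := w
            have hzw : S.lt a (r ++ [a]) z w :=
              ib a z w hua hav hk4 hk5 haw hwv ⟨ak, hk1, hk2, hk3, hk6⟩ hprem
            have hwz : S.lt a (r ++ [a]) w z := by
              refine hfw.2.2 z hk4 hk5 ?_
              intro hEq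
              exact S.irrefl _ _ _ (hEq ▸ hzw)
            exact S.irrefl _ _ _ (S.trans _ _ _ _ _ hzw hwz)
          exact Greedy.cons r u v a _ hfa hgr_tail

/-! #### Distinctness of label sequences -/

lemma labelSeq_prefix [Fintype α] :
    ∀ (c c' : List α) (u : α) (r : List α), c.Chain' (· ⋖ ·) → c'.Chain' (· ⋖ ·) →
      c.head? = some u → c'.head? = some u →
      labelSeq (rlab S) r c <+: labelSeq (rlab S) r c' → c <+: c'
  | [], _, u, r, _, _, h, _, _ => by simp at h
  | [x], c', u, r, _, _, h, h', _ => by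
      obtain rfl : u = x := by simpa using h.symm
      cases c' with
      | nil => simp at h'
      | cons y t => obtain rfl : u = y := by simpa using h'.symm
                    exact ⟨t, rfl⟩
  | x :: y :: t, c', u, r, hc, hc', h, h', hpre => by
      obtain rfl : u = x := by simpa using h.symm
      cases c' with
      | nil => simp at h'
      | cons x' t' =>
        obtain rfl : u = x' := by simpa using h'.symm
        cases t' with
        | nil => rw [labelSeq_cons] at hpre
                 simp [labelSeq] at hpre
        | cons y' t'' =>
          rw [labelSeq_cons, labelSeq_cons] at hpre
          obtain ⟨hhead, htail⟩ := List.cons_prefix_cons.mp hpre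
          have huy : u ⋖ y := (List.isChain_cons_cons.mp hc).1
          have huy' : u ⋖ y' := (List.isChain_cons_cons.mp hc').1
          obtain rfl : y = y' := rlab_inj huy huy' hhead
          have := labelSeq_prefix (y :: t) (y :: t'') y (r ++ [y])
            (List.isChain_cons_cons.mp hc).2 (List.isChain_cons_cons.mp hc').2 (by simp) (by simp) htail
          exact List.cons_prefix_cons.mpr ⟨rfl, this⟩

lemma satChain_not_strict_prefix {u v : α} {c c' : List α} (h : SatChain u v c)
    (h' : SatChain u v c') (hpre : c <+: c') : c = c' := by
  obtain ⟨e, rfl⟩ := hpre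
  cases e with
  | nil => simp
  | cons z e' =>
    exfalso
    have hpw : (c ++ z :: e').Pairwise (· < ·) :=
      List.isChain_iff_pairwise.mp (chain'_lt_of_chain'_covBy h'.1)
    have hvc : v ∈ c := by
      obtain ⟨hh, heq⟩ := List.mem_getLast?_eq_getLast (l := c) (x := v) h.2.2
      exact heq ▸ List.getLast_mem hh
    have hve : v ∈ z :: e' := by
      have : (c ++ z :: e').getLast? = (z :: e').getLast? :=
        List.getLast?_append_of_ne_nil (l₁ := c) (by simp)
      rw [h'.2.2] at this
      obtain ⟨hh, heq⟩ := List.mem_getLast?_eq_getLast (l := z :: e') (x := v) this.symm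
      exact heq ▸ List.getLast_mem hh
    have := (List.pairwise_append.mp hpw).2.2 v hvc v hve
    exact lt_irrefl v this

lemma labelSeq_distinct [Fintype α] {u v : α} {r : List α} {c c' : List α}
    (h : SatChain u v c) (h' : SatChain u v c') (hne : c ≠ c') :
    labelSeq (rlab S) r c ≠ labelSeq (rlab S) r c' ∧
      ¬ labelSeq (rlab S) r c <+: labelSeq (rlab S) r c' := by
  have key : ¬ labelSeq (rlab S) r c <+: labelSeq (rlab S) r c' := by
    intro hpre
    have hcp : c <+: c' := labelSeq_prefix c c' u r h.1 h'.1 h.2.1 h'.2.1 hpre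
    exact hne (satChain_not_strict_prefix h h' hcp)
  exact ⟨fun hEq => key (hEq ▸ List.prefix_refl _), key⟩

end Aux

/-- If a finite bounded poset admits a recursive atom ordering, then it admits a
CC-labeling with the unique earliest (UE) property; in particular it is CC-shellable. -/
theorem stmt_11 {α : Type*} [PartialOrder α] [BoundedOrder α] [Fintype α]
    (h : ∃ S : ChainAtomOrdering α, IsRAO S ⊥ ⊤ [⊥]) :
    ∃ (Q : Type) (_ : LinearOrder Q) (lab : List α → α → α → Q),
      IsCCLabeling lab ∧ HasUE lab := by
  obtain ⟨S, hS⟩ := h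
  refine ⟨ℕ, inferInstance, rlab S, ?_, ?_⟩
  · intro u v r hr huv
    constructor
    · -- unique topologically ascending chain
      have hRAO : IsRAO S u v r := isRAO_of_root hS hr huv
      obtain ⟨c₀, hg⟩ := greedy_exists S (Set.Ioc u v).ncard u v r huv (le_refl _)
      refine ⟨c₀, ⟨greedy_satChain hg, greedy_topAscending hg⟩, ?_⟩
      rintro c ⟨h1, h2⟩
      exact greedy_unique (ascending_greedy c u r hRAO h1 h2) c₀ hg
    · intro c c' h1 h2 hne
      exact labelSeq_distinct h1 h2 hne
  · intro u v r hr huv a b ha hav hb hbv hmina hminb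
    have h1 : rlab S r u a ≤ rlab S r u b := hmina b hb hbv
    have h2 : rlab S r u b ≤ rlab S r u a := hminb a ha hav
    exact rlab_inj ha hb (le_antisymm h1 h2)
end

section
/- Every CC-labeling of a finite bounded poset P that has the unique earliest (UE) property is self-consistent. -/
section Aux

variable {α : Type*} [PartialOrder α]

lemma chain'_head_le_getLast : ∀ {l : List α}, l.Chain' (· ≤ ·) →
    ∀ {x y : α}, l.head? = some x → l.getLast? = some y → x ≤ y
  | [], _, _, _, hx, _ => by simp at hx
  | [a], _, x, y, hx, hy => by
      simp at hx hy; subst hx; subst hy; rfl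
  | a :: b :: t, h, x, y, hx, hy => by
      simp only [List.head?_cons, Option.some.injEq] at hx
      subst hx
      rw [List.getLast?_cons_cons] at hy
      rw [List.Chain', List.isChain_cons_cons] at h
      exact h.1.trans (chain'_head_le_getLast h.2 rfl hy)

lemma chain'_mem_le_getLast : ∀ {l : List α}, l.Chain' (· ≤ ·) →
    ∀ {e y : α}, l.getLast? = some y → e ∈ l → e ≤ y
  | [], _, _, _, _, he => by simp at he
  | [a], _, e, y, hy, he => by
      simp at hy he; subst hy; subst he; rfl
  | a :: b :: t, h, e, y, hy, he => by
      rw [List.getLast?_cons_cons] at hy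
      rw [List.Chain', List.isChain_cons_cons] at h
      rcases List.mem_cons.1 he with rfl | he
      · exact h.1.trans (chain'_head_le_getLast h.2 rfl hy)
      · exact chain'_mem_le_getLast h.2 hy he

lemma satChain_chain'_le {x y : α} {l : List α} (h : SatChain x y l) :
    l.Chain' (· ≤ ·) :=
  h.1.imp fun _ _ h => h.le

lemma satChain_le {x y : α} {l : List α} (h : SatChain x y l) : x ≤ y :=
  chain'_head_le_getLast (satChain_chain'_le h) h.2.1 h.2.2

lemma satChain_mem_le_s12 {x y e : α} {l : List α} (h : SatChain x y l) (he : e ∈ l) :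
    e ≤ y :=
  chain'_mem_le_getLast (satChain_chain'_le h) h.2.2 he

/-- If `u ⋖ a` and `a` lies on a saturated chain from `u`, then `a` is its second
element. -/
lemma satChain_cons_cons {u v a : α} {l : List α} (hl : SatChain u v l)
    (hcov : u ⋖ a) (ha : a ∈ l) : ∃ t, l = u :: a :: t := by
  obtain ⟨hc, hh, -⟩ := hl
  match l with
  | [] => simp at ha
  | w :: s =>
    simp only [List.head?_cons, Option.some.injEq] at hh
    subst hh
    rcases List.mem_cons.1 ha with rfl | ha
    · exact absurd rfl hcov.lt.ne
    match s with
    | [] => simp at ha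
    | x :: t =>
      rw [List.Chain', List.isChain_cons_cons] at hc
      rcases List.mem_cons.1 ha with rfl | ha
      · exact ⟨t, rfl⟩
      · exfalso
        have hlt : x < a := by
          have hp : (x :: t).Pairwise (· < ·) :=
            List.isChain_iff_pairwise.1 (hc.2.imp fun _ _ h => h.lt)
          exact (List.pairwise_cons.1 hp).1 a ha
        exact hcov.2 hc.1.lt hlt

lemma satChain_eq_cons {x y : α} {l : List α} (h : SatChain x y l) :
    ∃ t, l = x :: t := by
  obtain ⟨-, hh, -⟩ := h
  cases l with
  | nil => simp at hh
  | cons w t =>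
    simp only [List.head?_cons, Option.some.injEq] at hh
    exact ⟨t, by rw [hh]⟩

lemma exists_satChain_s12 [Fintype α] {x y : α} (h : x ≤ y) :
    ∃ l, SatChain x y l := by
  have hsa : IsStronglyAtomic α :=
    IsStronglyAtomic.of_wellFounded_lt (wellFounded_lt)
  classical
  suffices H : ∀ n {x y : α},
      (Finset.univ.filter (fun z => x < z ∧ z ≤ y)).card ≤ n → x ≤ y →
      ∃ l, SatChain x y l from H _ le_rfl h
  intro n
  induction n with
  | zero =>
    intro x y hc h
    rcases eq_or_lt_of_le h with rfl | hlt
    · exact ⟨[x], List.isChain_singleton x, rfl, rfl⟩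
    · exfalso
      have hy : y ∈ Finset.univ.filter (fun z => x < z ∧ z ≤ y) := by
        simp [hlt]
      have := Finset.card_pos.mpr ⟨y, hy⟩
      omega
  | succ n ih =>
    intro x y hc h
    rcases eq_or_lt_of_le h with rfl | hlt
    · exact ⟨[x], List.isChain_singleton x, rfl, rfl⟩
    · obtain ⟨z, hxz, hzy⟩ := exists_covBy_le_of_lt hlt
      have hz : z ∈ Finset.univ.filter (fun w => x < w ∧ w ≤ y) := by
        simp [hxz.lt, hzy]
      have hsub : (Finset.univ.filter (fun w => z < w ∧ w ≤ y)) ⊆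
          (Finset.univ.filter (fun w => x < w ∧ w ≤ y)).erase z := by
        intro w hw
        simp only [Finset.mem_filter, Finset.mem_univ, true_and] at hw
        refine Finset.mem_erase.2 ⟨hw.1.ne', by simp [hxz.lt.trans hw.1, hw.2]⟩
      have hcard : (Finset.univ.filter (fun w => z < w ∧ w ≤ y)).card ≤ n := by
        have h1 := Finset.card_le_card hsub
        have h2 := Finset.card_erase_of_mem hz
        omega
      obtain ⟨l, hl⟩ := ih hcard hzy
      obtain ⟨s, rfl⟩ := satChain_eq_cons hl
      obtain ⟨hlc, -, hll⟩ := hl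
      refine ⟨x :: z :: s, List.isChain_cons_cons.2 ⟨hxz, hlc⟩, rfl, ?_⟩
      cases s with
      | nil => simpa using hll
      | cons b t =>
        rw [List.getLast?_cons_cons] at hll ⊢
        rw [List.getLast?_cons_cons]
        exact hll

lemma lex_cons_le_s12 {Q : Type*} [LinearOrder Q] {x y : Q} {l m : List Q}
    (h : List.Lex (· < ·) (x :: l) (y :: m)) : x ≤ y := by
  cases h with
  | cons _ => exact le_rfl
  | rel h => exact h.le

end Aux

/-- Every CC-labeling of a finite bounded poset with the unique earliest (UE)
property is self-consistent. -/
theorem stmt_12 {α Q : Type*} [PartialOrder α] [BoundedOrder α] [Fintype α]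
    [LinearOrder Q] (lab : List α → α → α → Q)
    (hcc : IsCCLabeling lab) (hue : HasUE lab) :
    SelfConsistent lab := by
  intro u v r hr c₀ hc₀ hfirst a hua ha b hub hbv hba v' hav' hbv' ca cb hca haca hcb hbcb
  obtain ⟨s₀, rfl⟩ := satChain_cons_cons hc₀ hua ha
  obtain ⟨sa, rfl⟩ := satChain_cons_cons hca hua haca
  obtain ⟨sb, rfl⟩ := satChain_cons_cons hcb hub hbcb
  have huv : u ≤ v := satChain_le hc₀
  have hav : a ≤ v := satChain_mem_le_s12 hc₀ ha
  -- `a` has the minimal label among atoms of `[u,v]_r`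
  have hmin : ∀ a', u ⋖ a' → a' ≤ v → lab r u a ≤ lab r u a' := by
    intro a' h1 h2
    by_cases heq : a' = a
    · subst heq; rfl
    · obtain ⟨l, hl⟩ := exists_satChain_s12 h2
      obtain ⟨s, rfl⟩ := satChain_eq_cons hl
      obtain ⟨hlc, -, hll⟩ := hl
      have hc' : SatChain u v (u :: a' :: s) := by
        refine ⟨List.isChain_cons_cons.2 ⟨h1, hlc⟩, rfl, ?_⟩
        cases s with
        | nil => simpa using hll
        | cons w t =>
          rw [List.getLast?_cons_cons] at hll ⊢
          rw [List.getLast?_cons_cons]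
          exact hll
      have hne : (u :: a' :: s) ≠ (u :: a :: s₀) := by
        simp [heq]
      have hlex := hfirst _ hc' hne
      simp only [labelSeq] at hlex
      exact lex_cons_le_s12 hlex
  have hltab : lab r u a < lab r u b := by
    rcases lt_or_eq_of_le (hmin b hub hbv) with h | h
    · exact h
    · exfalso
      refine hba (hue u v r hr huv b a hub hbv hua hav ?_ hmin)
      intro a' h1 h2
      rw [← h]
      exact hmin a' h1 h2
  simp only [labelSeq]
  exact List.Lex.rel hltab
end
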